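/- arXiv:1508.07287 — 8 statements merged into one kernel-verified Lean document; each statement's English description precedes it below -/
import Mathlib

section
/- Let R be a discrete valuation ring whose maximal ideal is generated by a uniformizer π and whose residue field R/πR is finite. Fix n ∈ R and let Λ = R[x]/(x(x−n)R[x]), a free R-module with basis {1, x}. Then every R-submodule I of Λ whose quotient Λ/I is finite is equal to the R-span of the two elements π^{r₁} + a·x and π^{r₂}·x for some natural numbers r₁, r₂ and some a ∈ R. -/
open Polynomial

private lemma stmt0_aux (R : Type*) [CommRing R] [IsDomain R] [IsDiscreteValuationRing R]
    (π : R) (hπ : IsLocalRing.maximalIdeal R = Ideal.span {π})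
    (f : R[X]) (hf : f.Monic) (hdeg : f.degree = 2)
    (I : Submodule R (R[X] ⧸ Ideal.span {f}))
    (hI : Finite ((R[X] ⧸ Ideal.span {f}) ⧸ I)) :
    ∃ (r₁ r₂ : ℕ) (a : R),
      I = Submodule.span R
        { Ideal.Quotient.mk (Ideal.span {f}) (C (π ^ r₁) + C a * X),
          Ideal.Quotient.mk (Ideal.span {f}) (C (π ^ r₂) * X) } := by
  have hirr : Irreducible π := (IsDiscreteValuationRing.irreducible_iff_uniformizer π).mpr hπ
  have hnotfin : ¬ Finite R := fun h =>
    IsDiscreteValuationRing.not_a_field R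
      (IsLocalRing.isField_iff_maximalIdeal_eq.mp (Finite.isField_of_domain R))
  have hsmul : ∀ (r : R) (p : R[X]),
      r • (Ideal.Quotient.mk (Ideal.span {f}) p)
        = Ideal.Quotient.mk (Ideal.span {f}) (C r * p) := fun r p => by
    rw [← smul_eq_C_mul, ← Ideal.Quotient.mkₐ_eq_mk R, map_smul]
  have hrep : ∀ z : R[X] ⧸ Ideal.span {f},
      ∃ c b : R, z = Ideal.Quotient.mk (Ideal.span {f}) (C c + C b * X) := by
    intro z
    obtain ⟨p, rfl⟩ := Ideal.Quotient.mk_surjective z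
    refine ⟨(p %ₘ f).coeff 0, (p %ₘ f).coeff 1, ?_⟩
    have hlt : (p %ₘ f).degree < 2 := hdeg ▸ degree_modByMonic_lt p hf
    have hle : (p %ₘ f).degree ≤ 1 := by
      cases hd : (p %ₘ f).degree with
      | bot => exact bot_le
      | coe m =>
        rw [hd] at hlt
        have hm2 : m < 2 := by exact WithBot.coe_lt_coe.mp hlt
        have hm1 : m ≤ 1 := Nat.lt_succ_iff.mp hm2
        exact WithBot.coe_le_coe.mpr hm1
    have h1 : p %ₘ f = C ((p %ₘ f).coeff 1) * X + C ((p %ₘ f).coeff 0) :=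
      eq_X_add_C_of_degree_le_one hle
    conv_lhs => rw [← modByMonic_add_div p f]
    rw [map_add, map_mul, Ideal.Quotient.eq_zero_iff_mem.mpr
      (Ideal.subset_span (Set.mem_singleton f)), zero_mul, add_zero]
    conv_lhs => rw [h1]
    exact congrArg _ (add_comm _ _)
  set lX : R →ₗ[R] (R[X] ⧸ Ideal.span {f}) :=
    LinearMap.toSpanSingleton R _ (Ideal.Quotient.mk (Ideal.span {f}) X) with hlX
  set l1 : R →ₗ[R] (R[X] ⧸ Ideal.span {f}) :=
    LinearMap.toSpanSingleton R _ (Ideal.Quotient.mk (Ideal.span {f}) 1) with hl1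
  set J2 : Ideal R := I.comap lX with hJ2
  set J1 : Ideal R :=
    (I ⊔ Submodule.span R {Ideal.Quotient.mk (Ideal.span {f}) X}).comap l1 with hJ1
  have hmem2 : ∀ b : R, b ∈ J2 ↔ Ideal.Quotient.mk (Ideal.span {f}) (C b * X) ∈ I := by
    intro b
    rw [hJ2, Submodule.mem_comap, hlX, LinearMap.toSpanSingleton_apply, hsmul]
  have hmem1 : ∀ c : R,
      c ∈ J1 ↔ ∃ b, Ideal.Quotient.mk (Ideal.span {f}) (C c + C b * X) ∈ I := by
    intro c
    rw [hJ1, Submodule.mem_comap, hl1, LinearMap.toSpanSingleton_apply, hsmul, mul_one,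
      Submodule.mem_sup]
    constructor
    · rintro ⟨y, hy, z, hz, hyz⟩
      obtain ⟨r, rfl⟩ := Submodule.mem_span_singleton.mp hz
      refine ⟨-r, ?_⟩
      have heq : Ideal.Quotient.mk (Ideal.span {f}) (C c + C (-r) * X)
          = Ideal.Quotient.mk (Ideal.span {f}) (C c)
            - r • Ideal.Quotient.mk (Ideal.span {f}) X := by
        rw [hsmul, ← map_sub]; congr 1; rw [map_neg]; ring
      rw [heq, ← hyz]; simpa using hy
    · rintro ⟨b, hb⟩
      refine ⟨Ideal.Quotient.mk (Ideal.span {f}) (C c + C b * X), hb,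
        (-b) • Ideal.Quotient.mk (Ideal.span {f}) X,
        Submodule.smul_mem _ _ (Submodule.mem_span_singleton_self _), ?_⟩
      rw [hsmul, ← map_add, map_neg]; congr 1; ring
  have hJ2ne : J2 ≠ ⊥ := by
    intro h
    apply hnotfin
    have hinj : Function.Injective (fun b : R =>
        Submodule.Quotient.mk (p := I) (Ideal.Quotient.mk (Ideal.span {f}) (C b * X))) := by
      intro b b' hbb
      have hm : Ideal.Quotient.mk (Ideal.span {f}) (C b * X)
          - Ideal.Quotient.mk (Ideal.span {f}) (C b' * X) ∈ I :=
        (Submodule.Quotient.eq I).mp hbb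
      rw [← map_sub] at hm
      have h2 : (b - b') ∈ J2 := (hmem2 _).mpr (by
        convert hm using 2; rw [C_sub]; ring)
      rw [h, Submodule.mem_bot] at h2
      exact sub_eq_zero.mp h2
    exact Finite.of_injective _ hinj
  have hJ1ne : J1 ≠ ⊥ := by
    intro h
    apply hnotfin
    have hinj : Function.Injective (fun c : R =>
        Submodule.Quotient.mk (p := I) (Ideal.Quotient.mk (Ideal.span {f}) (C c))) := by
      intro c c' hcc
      have hm : Ideal.Quotient.mk (Ideal.span {f}) (C c)
          - Ideal.Quotient.mk (Ideal.span {f}) (C c') ∈ I :=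
        (Submodule.Quotient.eq I).mp hcc
      rw [← map_sub] at hm
      have h2 : (c - c') ∈ J1 := (hmem1 _).mpr ⟨0, by
        convert hm using 2; rw [C_sub, C_0, zero_mul, add_zero]⟩
      rw [h, Submodule.mem_bot] at h2
      exact sub_eq_zero.mp h2
    exact Finite.of_injective _ hinj
  obtain ⟨r₁, hr₁⟩ := IsDiscreteValuationRing.ideal_eq_span_pow_irreducible hJ1ne hirr
  obtain ⟨r₂, hr₂⟩ := IsDiscreteValuationRing.ideal_eq_span_pow_irreducible hJ2ne hirr
  have hg1mem : π ^ r₁ ∈ J1 := hr₁ ▸ Ideal.mem_span_singleton_self _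
  have hg2mem : π ^ r₂ ∈ J2 := hr₂ ▸ Ideal.mem_span_singleton_self _
  obtain ⟨a, ha⟩ := (hmem1 _).mp hg1mem
  have hb2 : Ideal.Quotient.mk (Ideal.span {f}) (C (π ^ r₂) * X) ∈ I := (hmem2 _).mp hg2mem
  refine ⟨r₁, r₂, a, le_antisymm ?_ ?_⟩
  · intro z hz
    obtain ⟨c, b, rfl⟩ := hrep z
    have hc : c ∈ J1 := (hmem1 c).mpr ⟨b, hz⟩
    rw [hr₁] at hc
    obtain ⟨u, hu⟩ := Ideal.mem_span_singleton'.mp hc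
    have hdiff : Ideal.Quotient.mk (Ideal.span {f}) (C (b - u * a) * X) ∈ I := by
      have h3 := I.sub_mem hz (I.smul_mem u ha)
      rw [hsmul, ← map_sub] at h3
      convert h3 using 2
      rw [← hu]; simp only [C_sub, C_mul]; ring
    have hbJ2 : b - u * a ∈ J2 := (hmem2 _).mpr hdiff
    rw [hr₂] at hbJ2
    obtain ⟨v, hv⟩ := Ideal.mem_span_singleton'.mp hbJ2
    rw [Submodule.mem_span_pair]
    refine ⟨u, v, ?_⟩
    rw [hsmul, hsmul, ← map_add]
    congr 1
    have hb : b = u * a + v * π ^ r₂ := by linear_combination -hv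
    rw [← hu, hb]
    simp only [C_add, C_mul]; ring
  · rw [Submodule.span_le]
    rintro y hy
    simp only [Set.mem_insert_iff, Set.mem_singleton_iff] at hy
    rcases hy with rfl | rfl
    · exact ha
    · exact hb2

/-- Let `R` be a discrete valuation ring with uniformizer `π`
(so the maximal ideal of `R` is `πR`) and finite residue field `R/πR`.
Fix `n ∈ R` and let `Λ = R[x]/(x(x-n)R[x])`.  Then every `R`-submodule `I` of `Λ`
with finite quotient `Λ/I` is the `R`-span of `π^r₁ + a·x` and `π^r₂·x`
for some naturals `r₁, r₂` and some `a ∈ R`. -/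
theorem stmt0 (R : Type*) [CommRing R] [IsDomain R] [IsDiscreteValuationRing R]
    (π : R) (hπ : IsLocalRing.maximalIdeal R = Ideal.span {π})
    (hres : Finite (R ⧸ Ideal.span {π})) (n : R)
    (I : Submodule R (R[X] ⧸ Ideal.span {X * (X - C n)}))
    (hI : Finite ((R[X] ⧸ Ideal.span {X * (X - C n)}) ⧸ I)) :
    ∃ (r₁ r₂ : ℕ) (a : R),
      I = Submodule.span R
        { Ideal.Quotient.mk (Ideal.span {X * (X - C n)}) (C (π ^ r₁) + C a * X),
          Ideal.Quotient.mk (Ideal.span {X * (X - C n)}) (C (π ^ r₂) * X) } := by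
  refine stmt0_aux R π hπ (X * (X - C n)) (monic_X.mul (monic_X_sub_C n)) ?_ I hI
  rw [degree_mul, degree_X, degree_X_sub_C]; rfl
end

section
/- Let R be a discrete valuation ring with uniformizer π, let n ∈ R, and let Λ = R[x]/(x(x−n)R[x]). For natural numbers r₁, r₂ and a ∈ R, let I be the R-span in Λ of the two elements π^{r₁} + a·x and π^{r₂}·x. Then I is a (two-sided) ideal of the ring Λ if and only if π^{r₁} + a·n ∈ π^{r₂}R. -/
open Polynomial

/-- Let `R` be a discrete valuation ring with uniformizer `π`,
`n ∈ R`, and `Λ = R[x]/(x(x-n)R[x])`.  For naturals `r₁, r₂` and `a ∈ R`, the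
`R`-span `I` of `π^r₁ + a·x` and `π^r₂·x` in `Λ` is an ideal of the ring `Λ`
if and only if `π^r₁ + a·n ∈ π^r₂ R`. -/
theorem stmt1 (R : Type*) [CommRing R] [IsDomain R] [IsDiscreteValuationRing R]
    (π : R) (hπ : IsLocalRing.maximalIdeal R = Ideal.span {π})
    (n : R) (r₁ r₂ : ℕ) (a : R) :
    (∃ J : Ideal (R[X] ⧸ Ideal.span {X * (X - C n)}),
        Submodule.restrictScalars R J =
          Submodule.span R
            { Ideal.Quotient.mk (Ideal.span {X * (X - C n)}) (C (π ^ r₁) + C a * X),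
              Ideal.Quotient.mk (Ideal.span {X * (X - C n)}) (C (π ^ r₂) * X) })
      ↔ π ^ r₁ + a * n ∈ Ideal.span {π ^ r₂} := by
  have hf : (X * (X - C n)).Monic := monic_X.mul (monic_X_sub_C n)
  set f : R[X] := X * (X - C n) with hf_def
  have hdeg : f.degree = 2 := by
    rw [hf_def, degree_mul, degree_X, degree_X_sub_C]; rfl
  have hπ0 : π ≠ 0 := by
    intro h
    exact IsDiscreteValuationRing.not_a_field R
      (by rw [hπ, h, Ideal.span_singleton_eq_bot.mpr rfl])
  set u : AdjoinRoot f := AdjoinRoot.mk f (C (π ^ r₁) + C a * X) with hu_def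
  set v : AdjoinRoot f := AdjoinRoot.mk f (C (π ^ r₂) * X) with hv_def
  set S : Submodule R (AdjoinRoot f) := Submodule.span R {u, v} with hS_def
  -- the key relation: x * u = mk (C (π^r₁ + a*n) * X)
  have hxu : AdjoinRoot.mk f X * u = AdjoinRoot.mk f (C (π ^ r₁ + a * n) * X) := by
    rw [hu_def, ← map_mul, AdjoinRoot.mk_eq_mk]
    exact ⟨C a, by rw [hf_def]; push_cast [C_add, C_mul]; ring⟩
  have hxv : AdjoinRoot.mk f X * v = n • v := by
    rw [hv_def, ← map_mul, AdjoinRoot.smul_mk, AdjoinRoot.mk_eq_mk]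
    exact ⟨C (π ^ r₂), by rw [hf_def, smul_eq_C_mul]; ring⟩
  constructor
  · rintro ⟨J, hJ⟩
    have hJ' : Submodule.restrictScalars R J = S := hJ
    -- coefficient functionals
    let φ : ℕ → (AdjoinRoot f →ₗ[R] R) := fun i =>
      (lcoeff R i).comp (AdjoinRoot.modByMonicHom hf)
    have hφ : ∀ (i : ℕ) (p : R[X]), p.degree < 2 → φ i (AdjoinRoot.mk f p) = p.coeff i := by
      intro i p hp
      simp only [φ, LinearMap.comp_apply, AdjoinRoot.modByMonicHom_mk, lcoeff_apply]
      rw [(modByMonic_eq_self_iff hf).mpr (by rw [hdeg]; exact hp)]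
    have hdu : (C (π ^ r₁) + C a * X).degree < 2 :=
      lt_of_le_of_lt (by compute_degree) (by norm_num : (1 : WithBot ℕ) < 2)
    have hdv : ∀ b : R, (C b * X).degree < 2 := fun b =>
      lt_of_le_of_lt (by compute_degree) (by norm_num : (1 : WithBot ℕ) < 2)
    have huJ : u ∈ J := by
      have : u ∈ S := Submodule.subset_span (Set.mem_insert _ _)
      rw [← hJ'] at this
      exact this
    have hw : AdjoinRoot.mk f X * u ∈ S := by
      have : AdjoinRoot.mk f X * u ∈ Submodule.restrictScalars R J :=
        J.mul_mem_left _ huJ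
      rwa [hJ'] at this
    rw [hS_def, Submodule.mem_span_pair] at hw
    obtain ⟨α, β, hαβ⟩ := hw
    rw [hxu] at hαβ
    have hc0 : ∀ b : R, (C b * X).coeff 0 = 0 := fun b => by
      rw [coeff_C_mul, coeff_X_zero, mul_zero]
    have hc1 : ∀ b : R, (C b * X).coeff 1 = b := fun b => by
      rw [coeff_C_mul, coeff_X_one, mul_one]
    have hφu0 : φ 0 u = π ^ r₁ := by
      rw [hu_def, hφ 0 _ hdu, coeff_add, hc0, add_zero, coeff_C_zero]
    have hφu1 : φ 1 u = a := by
      rw [hu_def, hφ 1 _ hdu, coeff_add, hc1, coeff_C_ne_zero one_ne_zero, zero_add]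
    have hφv0 : φ 0 v = 0 := by rw [hv_def, hφ 0 _ (hdv _), hc0]
    have hφv1 : φ 1 v = π ^ r₂ := by rw [hv_def, hφ 1 _ (hdv _), hc1]
    have hφw0 : φ 0 (AdjoinRoot.mk f (C (π ^ r₁ + a * n) * X)) = 0 := by
      rw [hφ 0 _ (hdv _), hc0]
    have hφw1 : φ 1 (AdjoinRoot.mk f (C (π ^ r₁ + a * n) * X)) = π ^ r₁ + a * n := by
      rw [hφ 1 _ (hdv _), hc1]
    have h0 : α * π ^ r₁ + β * 0 = 0 := by
      have := congrArg (φ 0) hαβ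
      rwa [map_add, LinearMap.map_smul, LinearMap.map_smul, smul_eq_mul, smul_eq_mul,
        hφu0, hφv0, hφw0] at this
    have h1 : α * a + β * π ^ r₂ = π ^ r₁ + a * n := by
      have := congrArg (φ 1) hαβ
      rwa [map_add, LinearMap.map_smul, LinearMap.map_smul, smul_eq_mul, smul_eq_mul,
        hφu1, hφv1, hφw1] at this
    rw [mul_zero, add_zero] at h0
    have hα : α = 0 := by
      rcases mul_eq_zero.mp h0 with h | h
      · exact h
      · exact absurd h (pow_ne_zero _ hπ0)
    rw [hα, zero_mul, zero_add] at h1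
    exact Ideal.mem_span_singleton'.mpr ⟨β, h1⟩
  · intro h
    obtain ⟨c, hc⟩ := Ideal.mem_span_singleton'.mp h
    have hxu' : AdjoinRoot.mk f X * u = c • v := by
      rw [hxu, hv_def, AdjoinRoot.smul_mk, ← hc]
      congr 1
      rw [smul_eq_C_mul, C_mul]; ring
    have hvS : v ∈ S := Submodule.subset_span (Set.mem_insert_of_mem _ rfl)
    have hXS : ∀ y ∈ S, AdjoinRoot.mk f X * y ∈ S := by
      intro y hy
      rw [hS_def, Submodule.mem_span_pair] at hy
      obtain ⟨α, β, rfl⟩ := hy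
      rw [mul_add, mul_smul_comm, mul_smul_comm, hxu', hxv]
      exact S.add_mem (S.smul_mem α (S.smul_mem c hvS)) (S.smul_mem β (S.smul_mem n hvS))
    have hXkS : ∀ (k : ℕ), ∀ y ∈ S, (AdjoinRoot.mk f X) ^ k * y ∈ S := by
      intro k
      induction k with
      | zero => intro y hy; simpa using hy
      | succ k ih =>
        intro y hy
        rw [pow_succ, mul_assoc]
        exact ih _ (hXS y hy)
    have hmul : ∀ (z : AdjoinRoot f), ∀ y ∈ S, z * y ∈ S := by
      intro z
      obtain ⟨p, rfl⟩ := AdjoinRoot.mk_surjective z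
      induction p using Polynomial.induction_on' with
      | add p q hp hq =>
        intro y hy
        rw [map_add, add_mul]
        exact S.add_mem (hp y hy) (hq y hy)
      | monomial k b =>
        intro y hy
        rw [← C_mul_X_pow_eq_monomial, map_mul, map_pow, mul_assoc]
        have hb : AdjoinRoot.mk f (C b) * ((AdjoinRoot.mk f X) ^ k * y)
            = b • ((AdjoinRoot.mk f X) ^ k * y) := by
          obtain ⟨q, hq⟩ := AdjoinRoot.mk_surjective ((AdjoinRoot.mk f X) ^ k * y)
          rw [← hq, ← map_mul, AdjoinRoot.smul_mk, smul_eq_C_mul]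
        rw [hb]
        exact S.smul_mem b (hXkS k y hy)
    refine ⟨{ carrier := (S : Set (AdjoinRoot f))
              add_mem' := fun h1 h2 => S.add_mem h1 h2
              zero_mem' := S.zero_mem
              smul_mem' := fun z y hy => by exact (show z * y ∈ (S : Set (AdjoinRoot f)) from hmul z y hy) }, ?_⟩
    exact SetLike.ext fun z => Iff.rfl
end

section
/- Let R be a discrete valuation ring with uniformizer π and finite residue field of cardinality q, let Λ = R[x]/(x²R[x]), and for each natural number m let a_m be the number of ideals of Λ of index q^m. Then in the ring of formal power series ℤ⟦t⟧ one has the identity (Σ_{m≥0} a_m t^m) · (1 − t) · (1 − q t²) = 1. -/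
open Polynomial

set_option synthInstance.maxHeartbeats 1000000
set_option maxHeartbeats 1000000
set_option linter.unusedSectionVars false
set_option linter.unusedVariables false

section Basic

variable {R : Type*} [CommRing R] [IsDomain R]

local notation "Q" => R[X] ⧸ Ideal.span {(X : R[X]) ^ 2}

variable (R) in
/-- The element `u + v·x` of `Λ = R[X]/(X²)`. -/
noncomputable def eQ (u v : R) : Q := Ideal.Quotient.mk _ (C u + C v * X)

variable (R) in
/-- Evaluation at the first coordinate: the ring map `Λ → R`, `u + v·x ↦ u`. -/
noncomputable def c0 : Q →+* R :=
  Ideal.Quotient.lift _ (Polynomial.evalRingHom (0 : R)) (by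
    intro p hp
    rw [Ideal.mem_span_singleton] at hp
    obtain ⟨g, rfl⟩ := hp
    simp)

theorem eQ_surj (y : Q) : ∃ u v, y = eQ R u v := by
  obtain ⟨p, rfl⟩ := Ideal.Quotient.mk_surjective y
  refine ⟨(p %ₘ (X^2)).coeff 0, (p %ₘ (X^2)).coeff 1, ?_⟩
  have hmonic : ((X:R[X])^2).Monic := monic_X_pow 2
  have h1 : p %ₘ (X^2) = C ((p %ₘ (X^2)).coeff 1) * X + C ((p %ₘ (X^2)).coeff 0) := by
    apply Polynomial.eq_X_add_C_of_degree_le_one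
    have h := Polynomial.degree_modByMonic_lt p hmonic
    rw [Polynomial.degree_X_pow] at h
    exact Order.le_of_lt_succ (by exact_mod_cast h)
  have h2 : Ideal.Quotient.mk (Ideal.span {(X:R[X])^2}) p
      = Ideal.Quotient.mk _ (p %ₘ (X^2)) := by
    rw [Ideal.Quotient.eq, Ideal.mem_span_singleton]
    exact ⟨p /ₘ (X^2), by rw [eq_sub_of_add_eq' (Polynomial.modByMonic_add_div p (X^2))]⟩
  rw [h2, eQ]
  congr 1
  linear_combination h1

theorem eQ_add (u v u' v' : R) : eQ R u v + eQ R u' v' = eQ R (u+u') (v+v') := by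
  simp only [eQ, ← map_add]; congr 1; simp only [C_add]; ring

theorem eQ_mul (u v u' v' : R) : eQ R u v * eQ R u' v' = eQ R (u*u') (u*v'+v*u') := by
  simp only [eQ, ← map_mul]
  rw [Ideal.Quotient.eq, Ideal.mem_span_singleton]
  exact ⟨C v * C v', by simp only [C_add, C_mul]; ring⟩

theorem eQ_inj {u v : R} (h : eQ R u v = 0) : u = 0 ∧ v = 0 := by
  rw [eQ, Ideal.Quotient.eq_zero_iff_mem, Ideal.mem_span_singleton] at h
  obtain ⟨g, hg⟩ := h
  rw [mul_comm ((X:R[X])^2) g] at hg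
  have h0 := congrArg (fun p => Polynomial.coeff p 0) hg
  have h1 := congrArg (fun p => Polynomial.coeff p 1) hg
  simp [Polynomial.coeff_mul_X_pow'] at h0 h1
  exact ⟨h0, h1⟩

theorem eQ_zero : eQ R 0 0 = (0 : Q) := by rw [eQ]; simp

theorem eQ_neg (u v : R) : - eQ R u v = eQ R (-u) (-v) := by
  have h := eQ_add u v (-u) (-v)
  simp only [add_neg_cancel, eQ_zero] at h
  exact neg_eq_of_add_eq_zero_right h

theorem eQ_eq_iff {u v u' v' : R} : eQ R u v = eQ R u' v' ↔ u = u' ∧ v = v' := by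
  constructor
  · intro h
    have h2 : eQ R (u - u') (v - v') = 0 := by
      rw [sub_eq_add_neg, sub_eq_add_neg, ← eQ_add, ← eQ_neg, h]; ring
    obtain ⟨h3, h4⟩ := eQ_inj h2
    exact ⟨sub_eq_zero.mp h3, sub_eq_zero.mp h4⟩
  · rintro ⟨rfl, rfl⟩; rfl

theorem algebraMap_eq_eQ (s : R) : algebraMap R Q s = eQ R s 0 := by
  rw [eQ, IsScalarTower.algebraMap_apply R R[X] Q]
  simp [Polynomial.algebraMap_eq]

theorem smul_eQ (s u v : R) : s • eQ R u v = eQ R (s*u) (s*v) := by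
  show Ideal.Quotient.mk _ (s • (C u + C v * X)) = _
  rw [eQ]
  congr 1
  rw [smul_eq_C_mul]
  simp only [C_mul]
  ring

theorem c0_eQ (u v : R) : c0 R (eQ R u v) = u := by
  simp [c0, eQ]

variable (R) in
/-- The ideal `(π^a + r·x, π^b·x)` of `Λ`. -/
noncomputable def Idl (π : R) (a b : ℕ) (r : R) : Ideal Q :=
  Ideal.span {eQ R (π^a) r, eQ R 0 (π^b)}

theorem mem_Idl {π : R} {a b : ℕ} (hba : b ≤ a) {r : R} {y : Q} :
    y ∈ Idl R π a b r ↔ ∃ s t : R, y = eQ R (s * π^a) (s*r + t*π^b) := by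
  rw [Idl, Ideal.mem_span_pair]
  constructor
  · rintro ⟨z1, z2, rfl⟩
    obtain ⟨u1, v1, rfl⟩ := eQ_surj z1
    obtain ⟨u2, v2, rfl⟩ := eQ_surj z2
    refine ⟨u1, v1 * π^(a-b) + u2, ?_⟩
    rw [eQ_mul, eQ_mul, eQ_add]
    congr 1
    · ring
    · have : π ^ a = π^(a-b) * π^b := by rw [← pow_add]; congr 1; omega
      rw [this]; ring
  · rintro ⟨s, t, rfl⟩
    refine ⟨eQ R s 0, eQ R t 0, ?_⟩
    rw [eQ_mul, eQ_mul, eQ_add]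
    congr 1 <;> ring

section Card

variable {π : R} {a b : ℕ}

/-- The induced map `Λ/I → R/π^a` coming from `c0`. -/
noncomputable def psi (π : R) (a b : ℕ) (r : R) (hba : b ≤ a) :
    (Q ⧸ Idl R π a b r) →+* R ⧸ Ideal.span {π^a} :=
  Ideal.Quotient.lift _ ((Ideal.Quotient.mk (Ideal.span {π^a})).comp (c0 R)) (by
    intro y hy
    obtain ⟨s, t, rfl⟩ := (mem_Idl hba).mp hy
    simp only [RingHom.comp_apply, c0_eQ, Ideal.Quotient.eq_zero_iff_mem]
    exact Ideal.mul_mem_left _ s (Ideal.mem_span_singleton_self _))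

theorem psi_surj (r : R) (hba : b ≤ a) : Function.Surjective (psi (R := R) π a b r hba) := by
  intro z
  obtain ⟨s, rfl⟩ := Ideal.Quotient.mk_surjective z
  exact ⟨Ideal.Quotient.mk _ (eQ R s 0), by simp [psi, c0_eQ]⟩

/-- The linear map `v ↦ x·v mod I`. -/
noncomputable def phiL (π : R) (a b : ℕ) (r : R) : R →ₗ[R] (Q ⧸ Idl R π a b r) where
  toFun v := Ideal.Quotient.mk _ (eQ R 0 v)
  map_add' u v := by
    rw [← (Ideal.Quotient.mk (Idl R π a b r)).map_add, eQ_add, zero_add]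
  map_smul' s v := by
    simp only [RingHom.id_apply, smul_eq_mul]
    show _ = Ideal.Quotient.mk _ (s • eQ R 0 v)
    rw [smul_eQ, mul_zero]

/-- The induced injection `R/π^b → Λ/I`. -/
noncomputable def rho (π : R) (a b : ℕ) (r : R) (hπ0 : π ≠ 0) (hba : b ≤ a) :
    (R ⧸ Ideal.span {π^b}) →ₗ[R] (Q ⧸ Idl R π a b r) :=
  Submodule.liftQ _ (phiL π a b r) (by
    intro v hv
    rw [Ideal.mem_span_singleton] at hv
    obtain ⟨t, rfl⟩ := hv
    simp only [LinearMap.mem_ker, phiL, LinearMap.coe_mk, AddHom.coe_mk,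
      Ideal.Quotient.eq_zero_iff_mem]
    exact (mem_Idl hba).mpr ⟨0, t, by rw [eQ_eq_iff]; constructor <;> ring⟩)

theorem rho_inj (r : R) (hπ0 : π ≠ 0) (hba : b ≤ a) :
    Function.Injective (rho (R := R) π a b r hπ0 hba) := by
  rw [← LinearMap.ker_eq_bot, Submodule.eq_bot_iff]
  intro z hz
  obtain ⟨v, rfl⟩ := Ideal.Quotient.mk_surjective z
  have hv : phiL (R := R) π a b r v = 0 := hz
  simp only [phiL, LinearMap.coe_mk, AddHom.coe_mk, Ideal.Quotient.eq_zero_iff_mem] at hv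
  obtain ⟨s, t, hst⟩ := (mem_Idl hba).mp hv
  rw [eQ_eq_iff] at hst
  have hs : s = 0 := by
    have := hst.1.symm
    rcases mul_eq_zero.mp this with h | h
    · exact h
    · exact absurd h (pow_ne_zero a hπ0)
  rw [Ideal.Quotient.eq_zero_iff_mem, Ideal.mem_span_singleton]
  exact ⟨t, by rw [hst.2, hs]; ring⟩

theorem rho_range (r : R) (hπ0 : π ≠ 0) (hba : b ≤ a) :
    Set.range (rho (R := R) π a b r hπ0 hba)
      = ((psi (R := R) π a b r hba).toAddMonoidHom.ker : Set (Q ⧸ Idl R π a b r)) := by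
  ext z
  simp only [Set.mem_range, SetLike.mem_coe, AddMonoidHom.mem_ker]
  constructor
  · rintro ⟨w, rfl⟩
    obtain ⟨v, rfl⟩ := Ideal.Quotient.mk_surjective w
    show psi (R := R) π a b r hba (phiL (R := R) π a b r v) = 0
    simp only [phiL, LinearMap.coe_mk, AddHom.coe_mk, psi, Ideal.Quotient.lift_mk,
      RingHom.comp_apply, c0_eQ]
    simp
  · intro hz
    obtain ⟨y, rfl⟩ := Ideal.Quotient.mk_surjective z
    obtain ⟨u, v, rfl⟩ := eQ_surj y
    have : (Ideal.Quotient.mk (Ideal.span {π^a})) u = 0 := by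
      simpa [psi, c0_eQ] using hz
    rw [Ideal.Quotient.eq_zero_iff_mem, Ideal.mem_span_singleton] at this
    obtain ⟨s, rfl⟩ := this
    refine ⟨Ideal.Quotient.mk _ (v - s * r), ?_⟩
    show phiL (R := R) π a b r (v - s*r) = _
    simp only [phiL, LinearMap.coe_mk, AddHom.coe_mk]
    rw [Ideal.Quotient.eq]
    show eQ R 0 (v - s * r) - eQ R (π ^ a * s) v ∈ Idl R π a b r
    refine (mem_Idl hba).mpr ⟨-s, 0, ?_⟩
    show eQ R 0 (v - s * r) - eQ R (π ^ a * s) v = eQ R (-s * π ^ a) (-s * r + 0 * π ^ b)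
    rw [sub_eq_add_neg, eQ_neg, eQ_add, eQ_eq_iff]
    constructor <;> ring

theorem card_quot_Idl (r : R) (hπ0 : π ≠ 0) (hba : b ≤ a) :
    Nat.card (Q ⧸ Idl R π a b r)
      = Nat.card (R ⧸ Ideal.span {π^a}) * Nat.card (R ⧸ Ideal.span {π^b}) := by
  set ψ := psi (R := R) π a b r hba
  set K := ψ.toAddMonoidHom.ker
  have h1 : Nat.card (Q ⧸ Idl R π a b r) = Nat.card ((Q ⧸ Idl R π a b r) ⧸ K) * Nat.card K :=
    AddSubgroup.card_eq_card_quotient_mul_card_addSubgroup K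
  have e1 : ((Q ⧸ Idl R π a b r) ⧸ K) ≃+ (R ⧸ Ideal.span {π^a}) :=
    QuotientAddGroup.quotientKerEquivOfSurjective ψ.toAddMonoidHom (psi_surj r hba)
  have e2 : (R ⧸ Ideal.span {π^b}) ≃ K :=
    (Equiv.ofInjective _ (rho_inj r hπ0 hba)).trans (Equiv.setCongr (rho_range r hπ0 hba))
  rw [h1, Nat.card_congr e1.toEquiv, Nat.card_congr e2.symm]

end Card

section Classify

variable {π : R} {a b : ℕ}

/-- The linear map `v ↦ x·v mod I`, for an arbitrary ideal `I`. -/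
noncomputable def phiI (I : Ideal Q) : R →ₗ[R] (Q ⧸ I) where
  toFun v := Ideal.Quotient.mk _ (eQ R 0 v)
  map_add' u v := by
    rw [← (Ideal.Quotient.mk I).map_add, eQ_add, zero_add]
  map_smul' s v := by
    simp only [RingHom.id_apply, smul_eq_mul]
    show _ = Ideal.Quotient.mk _ (s • eQ R 0 v)
    rw [smul_eQ, mul_zero]

variable (R) in
/-- The first-coordinate ideal of `I`. -/
noncomputable def J0 (I : Ideal Q) : Ideal R := Ideal.map (c0 R) I

variable (R) in
/-- The second-coordinate ideal of `I`. -/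
noncomputable def Jb (I : Ideal Q) : Ideal R := LinearMap.ker (phiI I)

theorem mem_Jb {I : Ideal Q} {v : R} : v ∈ Jb R I ↔ eQ R 0 v ∈ I := by
  rw [Jb, LinearMap.mem_ker, phiI]
  simp only [LinearMap.coe_mk, AddHom.coe_mk]
  rw [Ideal.Quotient.eq_zero_iff_mem]

theorem J0_Idl (r : R) (hba : b ≤ a) : J0 R (Idl R π a b r) = Ideal.span {π ^ a} := by
  apply le_antisymm
  · rw [J0, Ideal.map_le_iff_le_comap]
    intro y hy
    obtain ⟨s, t, rfl⟩ := (mem_Idl hba).mp hy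
    simp only [Ideal.mem_comap, c0_eQ, Ideal.mem_span_singleton]
    exact ⟨s, mul_comm _ _⟩
  · rw [Ideal.span_le, Set.singleton_subset_iff]
    have : π ^ a = c0 R (eQ R (π^a) r) := (c0_eQ _ _).symm
    rw [this]
    exact Ideal.mem_map_of_mem _ ((mem_Idl hba).mpr ⟨1, 0, by rw [eQ_eq_iff]; constructor <;> ring⟩)

theorem Jb_Idl (r : R) (hπ0 : π ≠ 0) (hba : b ≤ a) :
    Jb R (Idl R π a b r) = Ideal.span {π ^ b} := by
  ext v
  rw [mem_Jb, mem_Idl hba, Ideal.mem_span_singleton]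
  constructor
  · rintro ⟨s, t, h⟩
    rw [eQ_eq_iff] at h
    have hs : s = 0 := by
      rcases mul_eq_zero.mp h.1.symm with h0 | h0
      · exact h0
      · exact absurd h0 (pow_ne_zero a hπ0)
    exact ⟨t, by rw [h.2, hs]; ring⟩
  · rintro ⟨t, rfl⟩
    exact ⟨0, t, by rw [eQ_eq_iff]; constructor <;> ring⟩

/-- Classification: every ideal whose coordinate ideals are `(π^a)` and `(π^b)` is an `Idl`. -/
theorem ideal_eq_Idl {I : Ideal Q} (hπ0 : π ≠ 0) (hba : b ≤ a)
    (h0 : J0 R I = Ideal.span {π ^ a}) (hb : Jb R I = Ideal.span {π ^ b}) :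
    ∃ r : R, I = Idl R π a b r := by
  have hc0surj : Function.Surjective (c0 R) := by
    intro s; exact ⟨eQ R s 0, c0_eQ s 0⟩
  have hπa : π ^ a ∈ J0 R I := h0 ▸ Ideal.mem_span_singleton_self _
  rw [J0, Ideal.mem_map_iff_of_surjective _ hc0surj] at hπa
  obtain ⟨y, hyI, hy⟩ := hπa
  obtain ⟨u, r, rfl⟩ := eQ_surj y
  rw [c0_eQ] at hy
  subst hy
  refine ⟨r, le_antisymm ?_ ?_⟩
  · intro z hz
    obtain ⟨u', v', rfl⟩ := eQ_surj z
    have hu' : u' ∈ Ideal.span {π ^ a} := by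
      rw [← h0, J0]
      have : u' = c0 R (eQ R u' v') := (c0_eQ _ _).symm
      rw [this]
      exact Ideal.mem_map_of_mem _ hz
    rw [Ideal.mem_span_singleton] at hu'
    obtain ⟨s, rfl⟩ := hu'
    have hdiff : eQ R 0 (v' - s * r) ∈ I := by
      have key : eQ R (π^a*s) v' - eQ R s 0 * eQ R (π^a) r = eQ R 0 (v' - s*r) := by
        rw [eQ_mul, sub_eq_add_neg, eQ_neg, eQ_add, eQ_eq_iff]
        constructor <;> ring
      rw [← key]
      exact Submodule.sub_mem _ hz (Ideal.mul_mem_left _ _ hyI)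
    have : v' - s * r ∈ Ideal.span {π^b} := hb ▸ mem_Jb.mpr hdiff
    rw [Ideal.mem_span_singleton] at this
    obtain ⟨t, ht⟩ := this
    refine (mem_Idl hba).mpr ⟨s, t, ?_⟩
    rw [eQ_eq_iff]
    constructor
    · ring
    · rw [show s * r + t * π^b = s * r + (v' - s * r) by rw [ht]; ring]; ring
  · rw [Idl, Ideal.span_le]
    rintro z hz
    simp only [Set.mem_insert_iff, Set.mem_singleton_iff] at hz
    rcases hz with rfl | rfl
    · exact hyI
    · have : π ^ b ∈ Jb R I := hb ▸ Ideal.mem_span_singleton_self _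
      exact mem_Jb.mp this

end Classify

end Basic

section DVR

variable {R : Type*} [CommRing R] [IsDomain R] [IsDiscreteValuationRing R]
  {π : R} (hπ : IsLocalRing.maximalIdeal R = Ideal.span {π})

include hπ

theorem card_quot_pow (k : ℕ) :
    Nat.card (R ⧸ Ideal.span {π ^ k}) = (Nat.card (R ⧸ Ideal.span {π})) ^ k := by
  have hmax : (Ideal.span {π}).IsMaximal := hπ ▸ IsLocalRing.maximalIdeal.isMaximal R
  have hprime : (Ideal.span {π}).IsPrime := hmax.isPrime
  have hbot : Ideal.span {π} ≠ ⊥ := hπ ▸ IsDiscreteValuationRing.not_a_field R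
  have := cardQuot_pow_of_prime (P := Ideal.span {π}) hbot (i := k)
  simp only [Submodule.cardQuot_apply] at this
  rw [← Ideal.span_singleton_pow]
  exact this

theorem infinite_R : Infinite R := by
  have h : Irreducible π := (IsDiscreteValuationRing.irreducible_iff_uniformizer π).mpr hπ
  refine Infinite.of_injective (fun n : ℕ => π ^ n) ?_
  intro i j hij
  by_contra hne
  wlog hlt : i < j generalizing i j
  · exact this hij.symm (Ne.symm hne) (by omega)
  simp only at hij
  have : π ^ i * (1 - π ^ (j - i)) = 0 := by
    rw [mul_sub, mul_one, ← pow_add]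
    rw [show i + (j - i) = j by omega]
    rw [hij]; ring
  rcases mul_eq_zero.mp this with h0 | h0
  · exact pow_ne_zero i h.ne_zero h0
  · have : π ^ (j - i) = 1 := by linear_combination -h0
    have hu : IsUnit π := by
      have : IsUnit (π ^ (j - i)) := this ▸ isUnit_one
      exact (isUnit_pow_iff (by omega)).mp this
    exact h.not_isUnit hu

end DVR

section Count

variable {R : Type*} [CommRing R] [IsDomain R] [IsDiscreteValuationRing R]

local notation "Q" => R[X] ⧸ Ideal.span {(X : R[X]) ^ 2}

variable {π : R} (hπ : IsLocalRing.maximalIdeal R = Ideal.span {π})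
  {q : ℕ} (hres : Finite (R ⧸ Ideal.span {π})) (hq : Nat.card (R ⧸ Ideal.span {π}) = q)

include hπ hres hq

theorem hq2 : 2 ≤ q := by
  have hmax : (Ideal.span {π}).IsMaximal := hπ ▸ IsLocalRing.maximalIdeal.isMaximal R
  have : Nontrivial (R ⧸ Ideal.span {π}) := Ideal.Quotient.nontrivial_iff.mpr hmax.ne_top
  have h1 : 1 < Nat.card (R ⧸ Ideal.span {π}) := Finite.one_lt_card
  omega

theorem hcardk (k : ℕ) : Nat.card (R ⧸ Ideal.span {π ^ k}) = q ^ k := by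
  rw [card_quot_pow hπ, hq]

theorem hfinitek (k : ℕ) : Finite (R ⧸ Ideal.span {π ^ k}) := by
  have := hcardk hπ hres hq k
  have h2 := hq2 hπ hres hq
  exact Nat.finite_of_card_ne_zero (by rw [this]; positivity)

theorem classify (m : ℕ) (I : Ideal Q) (hI : Nat.card (Q ⧸ I) = q ^ m) :
    ∃ a b r, b ≤ a ∧ a + b = m ∧ I = Idl R π a b r := by
  have h2 := hq2 hπ hres hq
  have hirr : Irreducible π := (IsDiscreteValuationRing.irreducible_iff_uniformizer π).mpr hπ
  have hπ0 : π ≠ 0 := hirr.ne_zero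
  have hInf := infinite_R hπ
  have hfin : Finite (Q ⧸ I) := Nat.finite_of_card_ne_zero (by rw [hI]; positivity)
  have hc0surj : Function.Surjective (c0 R) := fun s => ⟨eQ R s 0, c0_eQ s 0⟩
  -- finiteness of R ⧸ J0 I
  have hτ : ∃ τ : (Q ⧸ I) →+* (R ⧸ J0 R I), Function.Surjective τ := by
    refine ⟨Ideal.Quotient.lift I ((Ideal.Quotient.mk (J0 R I)).comp (c0 R)) (fun y hy => by
      simp only [RingHom.comp_apply, Ideal.Quotient.eq_zero_iff_mem]
      exact Ideal.mem_map_of_mem _ hy), fun z => ?_⟩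
    obtain ⟨s, rfl⟩ := Ideal.Quotient.mk_surjective z
    obtain ⟨y, hy⟩ := hc0surj s
    exact ⟨Ideal.Quotient.mk I y, by simp [hy]⟩
  obtain ⟨τ, hτs⟩ := hτ
  have hfin0 : Finite (R ⧸ J0 R I) := Finite.of_surjective τ hτs
  have hbotfin : ∀ Jx : Ideal R, Finite (R ⧸ Jx) → Jx ≠ ⊥ := by
    intro Jx hfinx hbot
    subst hbot
    have hinj : Function.Injective (Ideal.Quotient.mk (⊥ : Ideal R)) := by
      intro x y h
      rw [Ideal.Quotient.eq, Ideal.mem_bot, sub_eq_zero] at h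
      exact h
    exact absurd (Finite.of_injective _ hinj) (by simpa using Infinite.not_finite)
  obtain ⟨av, hJ0⟩ := IsDiscreteValuationRing.ideal_eq_span_pow_irreducible
    (hbotfin _ hfin0) hirr
  -- finiteness of R ⧸ Jb I
  have hfinb : Finite (R ⧸ Jb R I) := by
    have e := LinearMap.quotKerEquivRange (phiI I)
    have : Finite (LinearMap.range (phiI I)) := Subtype.finite
    exact Finite.of_equiv _ (e.toEquiv).symm
  obtain ⟨bv, hJb⟩ := IsDiscreteValuationRing.ideal_eq_span_pow_irreducible
    (hbotfin _ hfinb) hirr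
  -- b ≤ a
  have hba : bv ≤ av := by
    have hπa : π ^ av ∈ J0 R I := hJ0 ▸ Ideal.mem_span_singleton_self _
    rw [J0, Ideal.mem_map_iff_of_surjective _ hc0surj] at hπa
    obtain ⟨y, hyI, hy⟩ := hπa
    have hπaJb : π ^ av ∈ Jb R I := by
      rw [mem_Jb]
      obtain ⟨u, v, rfl⟩ := eQ_surj y
      rw [c0_eQ] at hy
      subst hy
      have heq : eQ R 0 (π ^ av) = eQ R (π ^ av) v * eQ R 0 1 := by
        rw [eQ_mul, eQ_eq_iff]
        constructor <;> ring
      rw [heq]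
      exact Ideal.mul_mem_right _ _ hyI
    rw [hJb, Ideal.mem_span_singleton] at hπaJb
    obtain ⟨c, hc⟩ := hπaJb
    by_contra hlt
    push_neg at hlt
    have hstep : π ^ av * 1 = π ^ av * (c * π ^ (bv - av)) :=
      calc π ^ av * 1 = π ^ bv * c := by rw [mul_one, hc]
        _ = π ^ av * (c * π ^ (bv - av)) := by
            have hpow : π ^ av * π ^ (bv - av) = π ^ bv := by
              rw [← pow_add]; congr 1; omega
            linear_combination (-c) * hpow
    have h1 : (1 : R) = c * π ^ (bv - av) := mul_left_cancel₀ (pow_ne_zero av hπ0) hstep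
    exact hirr.not_isUnit ((isUnit_pow_iff (by omega : bv - av ≠ 0)).mp
      (IsUnit.of_mul_eq_one (a := π ^ (bv - av)) c (by rw [mul_comm] at h1; exact h1.symm)))
  obtain ⟨r, hIdl⟩ := ideal_eq_Idl hπ0 hba hJ0 hJb
  refine ⟨av, bv, r, hba, ?_, hIdl⟩
  have := card_quot_Idl (π := π) r hπ0 hba
  rw [← hIdl, hI, hcardk hπ hres hq, hcardk hπ hres hq, ← pow_add] at this
  exact Nat.pow_right_injective h2 this.symm

omit hπ hres hq in
theorem Idl_le_Idl {a b : ℕ} (hba : b ≤ a) {r r' : R} (h : r - r' ∈ Ideal.span {π^b}) :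
    Idl R π a b r ≤ Idl R π a b r' := by
  rw [Ideal.mem_span_singleton] at h
  obtain ⟨t, ht⟩ := h
  rw [Idl, Ideal.span_le]
  rintro z hz
  simp only [Set.mem_insert_iff, Set.mem_singleton_iff] at hz
  rcases hz with rfl | rfl
  · exact (mem_Idl hba).mpr ⟨1, t, by
      rw [eQ_eq_iff]; exact ⟨by ring, by linear_combination ht⟩⟩
  · exact (mem_Idl hba).mpr ⟨0, 1, by rw [eQ_eq_iff]; constructor <;> ring⟩

omit hπ hres hq in
theorem Idl_congr {a b : ℕ} (hba : b ≤ a) {r r' : R} (h : r - r' ∈ Ideal.span {π^b}) :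
    Idl R π a b r = Idl R π a b r' :=
  le_antisymm (Idl_le_Idl hba h) (Idl_le_Idl hba (by
    rw [show r' - r = -(r - r') by ring]; exact Submodule.neg_mem _ h))

theorem count (m : ℕ) :
    Nat.card {I : Ideal Q // Nat.card ((Q) ⧸ I) = q ^ m}
      = ∑ i ∈ Finset.range (m/2+1), q^i := by
  classical
  have h2 := hq2 hπ hres hq
  have hirr : Irreducible π := (IsDiscreteValuationRing.irreducible_iff_uniformizer π).mpr hπ
  have hπ0 : π ≠ 0 := hirr.ne_zero
  have hble : ∀ b : Fin (m/2+1), (b:ℕ) ≤ m - (b:ℕ) := by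
    intro b; have := b.2; omega
  have wd : ∀ (b : Fin (m/2+1)) (r r' : R),
      @Setoid.r _ (Submodule.quotientRel (Ideal.span {π^(b:ℕ)})) r r' →
      Idl R π (m-(b:ℕ)) (b:ℕ) r = Idl R π (m-(b:ℕ)) (b:ℕ) r' := by
    intro b r r' hrr
    exact Idl_congr (hble b) ((Submodule.quotientRel_def _).mp hrr)
  set Gv : (Σ b : Fin (m/2+1), R ⧸ Ideal.span {π^(b:ℕ)}) → Ideal Q := fun p =>
    Quotient.liftOn' p.2 (fun r => Idl R π (m-(p.1:ℕ)) (p.1:ℕ) r) (wd p.1) with hGv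
  have hGvmk : ∀ (b : Fin (m/2+1)) (r : R),
      Gv ⟨b, Submodule.Quotient.mk r⟩ = Idl R π (m-(b:ℕ)) (b:ℕ) r := fun b r => rfl
  have hGcard : ∀ p, Nat.card ((Q) ⧸ Gv p) = q ^ m := by
    rintro ⟨b, rb⟩
    induction rb using Quotient.inductionOn' with
    | h r =>
      rw [show (Quotient.mk'' r : R ⧸ Ideal.span {π^(b:ℕ)}) = Submodule.Quotient.mk r from rfl,
        hGvmk b r, card_quot_Idl r hπ0 (hble b), hcardk hπ hres hq, hcardk hπ hres hq,
        ← pow_add]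
      congr 1
      have := b.2; omega
  set G : (Σ b : Fin (m/2+1), R ⧸ Ideal.span {π^(b:ℕ)})
      → {I : Ideal Q // Nat.card ((Q) ⧸ I) = q ^ m} := fun p => ⟨Gv p, hGcard p⟩ with hG
  have hGbij : Function.Bijective G := by
    constructor
    · rintro ⟨b, rb⟩ ⟨b', rb'⟩ hGeq
      induction rb using Quotient.inductionOn' with
      | h r =>
      induction rb' using Quotient.inductionOn' with
      | h r' =>
      have hval : Idl R π (m-(b:ℕ)) (b:ℕ) r = Idl R π (m-(b':ℕ)) (b':ℕ) r' := by
        have := congrArg Subtype.val hGeq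
        simpa [hG, hGv] using this
      have hbb' : (b:ℕ) = (b':ℕ) := by
        have hJ := congrArg (Jb R) hval
        rw [Jb_Idl r hπ0 (hble b), Jb_Idl r' hπ0 (hble b')] at hJ
        have hcards := congrArg (fun Jx : Ideal R => Nat.card (R ⧸ Jx)) hJ
        rw [hcardk hπ hres hq, hcardk hπ hres hq] at hcards
        exact Nat.pow_right_injective h2 hcards
      obtain ⟨bn, hbn⟩ := b
      obtain ⟨bn', hbn'⟩ := b'
      simp only at hbb'
      subst hbb'
      have hrr' : r - r' ∈ Ideal.span {π^bn} := by
        have hmem : eQ R (π^(m-bn)) r ∈ Idl R π (m-bn) bn r' := by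
          rw [← hval, Idl]
          exact Ideal.subset_span (Set.mem_insert _ _)
        obtain ⟨s, t, hst⟩ := (mem_Idl (hble ⟨bn, hbn⟩)).mp hmem
        rw [eQ_eq_iff] at hst
        have hs1 : s = 1 := by
          have := hst.1
          have h1 : (1 : R) * π ^ (m-bn) = s * π ^ (m-bn) := by linear_combination this
          exact (mul_right_cancel₀ (pow_ne_zero _ hπ0) h1).symm
        rw [Ideal.mem_span_singleton]
        exact ⟨t, by rw [hs1] at hst; linear_combination hst.2⟩
      exact Sigma.ext rfl (heq_of_eq ((Submodule.Quotient.eq _).mpr hrr'))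
    · rintro ⟨I, hI⟩
      obtain ⟨a, b, r, hba, habm, rfl⟩ := classify hπ hres hq m I hI
      have hblt : b < m/2+1 := by omega
      refine ⟨⟨⟨b, hblt⟩, Submodule.Quotient.mk r⟩, ?_⟩
      have hval : Gv ⟨⟨b, hblt⟩, Submodule.Quotient.mk r⟩ = Idl R π a b r := by
        rw [hGvmk]
        congr 2 <;> simp only [Fin.val_mk] <;> omega
      exact Subtype.ext hval
  letI : ∀ b : Fin (m/2+1), Fintype (R ⧸ Ideal.span {π^(b:ℕ)}) :=
    fun b => @Fintype.ofFinite _ (hfinitek hπ hres hq (b:ℕ))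
  rw [← Nat.card_eq_of_bijective G hGbij, Nat.card_eq_fintype_card, Fintype.card_sigma]
  rw [← Fin.sum_univ_eq_sum_range (fun i => q ^ i) (m/2+1)]
  congr 1
  ext b
  rw [← Nat.card_eq_fintype_card, hcardk hπ hres hq]

end Count

theorem ps_identity (q : ℕ) :
    (PowerSeries.mk fun m => ((∑ i ∈ Finset.range (m/2+1), q^i : ℕ) : ℤ)) *
      (1 - PowerSeries.X) * (1 - (q : PowerSeries ℤ) * PowerSeries.X ^ 2) = 1 := by
  set S : ℕ → ℤ := fun m => ((∑ i ∈ Finset.range (m/2+1), q^i : ℕ) : ℤ) with hS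
  set H : PowerSeries ℤ := PowerSeries.mk fun n => if Even n then (q:ℤ)^(n/2) else 0 with hH
  have claim1 : (PowerSeries.mk S) * (1 - PowerSeries.X) = H := by
    rw [mul_sub, mul_one]
    ext n
    rw [map_sub]
    cases n with
    | zero =>
      simp [PowerSeries.coeff_zero_mul_X, hS, hH]
    | succ n =>
      rw [PowerSeries.coeff_succ_mul_X]
      simp only [PowerSeries.coeff_mk, hS, hH]
      rcases Nat.even_or_odd (n+1) with he | ho
      · have he' := Nat.even_iff.mp he
        have h2 : (n+1)/2 + 1 = n/2 + 1 + 1 := by omega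
        rw [h2, Finset.sum_range_succ, if_pos he]
        push_cast
        have : n/2 + 1 = (n+1)/2 := by omega
        rw [this]; ring
      · have ho' := Nat.odd_iff.mp ho
        have h2 : (n+1)/2 = n/2 := by omega
        rw [if_neg (Nat.not_even_iff_odd.mpr ho)]
        rw [h2]; ring
  have claim2 : H * (1 - (q : PowerSeries ℤ) * PowerSeries.X ^ 2) = 1 := by
    have hq : H * ((q : PowerSeries ℤ) * PowerSeries.X ^ 2)
        = (H * PowerSeries.C (q:ℤ)) * PowerSeries.X ^ 2 := by
      rw [← map_natCast (PowerSeries.C (R := ℤ)) q]; ring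
    rw [mul_sub, mul_one, hq]
    ext n
    rw [map_sub, PowerSeries.coeff_mul_X_pow', PowerSeries.coeff_mul_C]
    simp only [hH, PowerSeries.coeff_mk, PowerSeries.coeff_one]
    match n with
    | 0 => norm_num
    | 1 => norm_num
    | (n+2) =>
      rw [if_pos (by omega : 2 ≤ n + 2)]
      have h2 : n + 2 - 2 = n := by omega
      rw [h2]
      rcases Nat.even_or_odd n with he | ho
      · have he' := Nat.even_iff.mp he
        rw [if_pos he, if_pos (by rw [Nat.even_add]; simpa using he), if_neg (by omega)]
        have : (n+2)/2 = n/2 + 1 := by omega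
        rw [this]; ring
      · have ho' := Nat.odd_iff.mp ho
        rw [if_neg (Nat.not_even_iff_odd.mpr ho), if_neg (by
            rw [Nat.even_add]; simpa using Nat.not_even_iff_odd.mpr ho), if_neg (by omega)]
        ring
  rw [claim1, claim2]

/-- Let `R` be a discrete valuation ring with uniformizer `π`
and finite residue field of cardinality `q`, and let `Λ = R[x]/(x² R[x])`.
With `a_m` the number of ideals of `Λ` of index `q^m`, one has in `ℤ⟦t⟧` the
identity `(∑ a_m t^m)·(1 - t)·(1 - q t²) = 1`. -/
theorem stmt6 (R : Type*) [CommRing R] [IsDomain R] [IsDiscreteValuationRing R]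
    (π : R) (hπ : IsLocalRing.maximalIdeal R = Ideal.span {π})
    (q : ℕ) (hres : Finite (R ⧸ Ideal.span {π}))
    (hq : Nat.card (R ⧸ Ideal.span {π}) = q)
    (a : ℕ → ℕ)
    (ha : ∀ m : ℕ, a m = Nat.card {I : Ideal (R[X] ⧸ Ideal.span {(X : R[X]) ^ 2}) //
        Nat.card ((R[X] ⧸ Ideal.span {(X : R[X]) ^ 2}) ⧸ I) = q ^ m}) :
    (PowerSeries.mk fun m => (a m : ℤ)) * (1 - PowerSeries.X) *
        (1 - (q : PowerSeries ℤ) * PowerSeries.X ^ 2) = 1 := by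
  have hcount : ∀ m, a m = ∑ i ∈ Finset.range (m/2+1), q^i := by
    intro m
    rw [ha m]
    exact count hπ hres hq m
  have hmk : (PowerSeries.mk fun m => (a m : ℤ))
      = PowerSeries.mk fun m => ((∑ i ∈ Finset.range (m/2+1), q^i : ℕ) : ℤ) := by
    ext n
    simp only [PowerSeries.coeff_mk, hcount n]
  rw [hmk]
  exact ps_identity q
end

section
/- Let R be a nontrivial commutative ring and let n ≥ 2 be a natural number. Let A = J − 1 in the ring of n×n matrices over R, where J is the all-ones matrix. Then the R-subalgebra of n×n matrices generated by A equals the R-span of {1, A}, and it is isomorphic as an R-algebra to R[x]/(x(x−n)R[x]). -/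
open Polynomial


private lemma JmulJ (R : Type*) [CommRing R] (n : ℕ) :
    ((Matrix.of fun _ _ => (1:R)) : Matrix (Fin n) (Fin n) R) * (Matrix.of fun _ _ => (1:R)) =
      (n : R) • (Matrix.of fun _ _ => (1:R)) := by
  ext i j
  simp [Matrix.mul_apply]

private lemma linindep (R : Type*) [CommRing R] [Nontrivial R] (n : ℕ) (hn : 2 ≤ n)
    (a b : R)
    (h : a • (1 : Matrix (Fin n) (Fin n) R) + b • (Matrix.of fun _ _ => (1:R)) = 0) :
    a = 0 ∧ b = 0 := by
  have hne : (⟨0, by omega⟩ : Fin n) ≠ ⟨1, by omega⟩ := by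
    simp [Fin.ext_iff]
  have h01 := congrFun (congrFun h ⟨0, by omega⟩) ⟨1, by omega⟩
  have h00 := congrFun (congrFun h ⟨0, by omega⟩) ⟨0, by omega⟩
  simp [Matrix.one_apply, hne] at h01 h00
  constructor
  · linear_combination h00 - h01
  · exact h01

/-- Let `R` be a nontrivial commutative ring, `n ≥ 2`, and
`A = J - 1` in the `n×n` matrices over `R` (`J` the all-ones matrix).  Then the
`R`-subalgebra generated by `A` equals the `R`-span of `{1, A}`, and it is
isomorphic as an `R`-algebra to `R[x]/(x(x-n)R[x])`. -/
theorem stmt10 (R : Type*) [CommRing R] [Nontrivial R] (n : ℕ) (hn : 2 ≤ n) :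
    (Subalgebra.toSubmodule
        (Algebra.adjoin R
          {(Matrix.of fun _ _ => (1 : R)) - (1 : Matrix (Fin n) (Fin n) R)}) =
      Submodule.span R
        {(1 : Matrix (Fin n) (Fin n) R),
          (Matrix.of fun _ _ => (1 : R)) - (1 : Matrix (Fin n) (Fin n) R)}) ∧
    Nonempty
      ((R[X] ⧸ Ideal.span {X * (X - C (n : R))}) ≃ₐ[R]
        (Algebra.adjoin R
          {(Matrix.of fun _ _ => (1 : R)) - (1 : Matrix (Fin n) (Fin n) R)})) := by
  set J : Matrix (Fin n) (Fin n) R := Matrix.of fun _ _ => (1:R) with hJdef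
  set A : Matrix (Fin n) (Fin n) R := J - 1 with hAdef
  have hJJ : J * J = (n : R) • J := JmulJ R n
  have hAsq : A * A = ((n:R) - 2) • A + ((n:R) - 1) • (1 : Matrix (Fin n) (Fin n) R) := by
    rw [hAdef]
    rw [sub_mul, mul_sub, mul_sub, hJJ]
    simp only [one_mul, mul_one]
    module
  -- the span as a subalgebra
  have h1mem : (1 : Matrix (Fin n) (Fin n) R) ∈ Submodule.span R {(1:Matrix (Fin n) (Fin n) R), A} :=
    Submodule.subset_span (by simp)
  have hAmem : A ∈ Submodule.span R {(1:Matrix (Fin n) (Fin n) R), A} :=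
    Submodule.subset_span (by simp)
  have hmulmem : ∀ x y : Matrix (Fin n) (Fin n) R,
      x ∈ Submodule.span R {(1:Matrix (Fin n) (Fin n) R), A} →
      y ∈ Submodule.span R {(1:Matrix (Fin n) (Fin n) R), A} →
      x * y ∈ Submodule.span R {(1:Matrix (Fin n) (Fin n) R), A} := by
    intro x y hx hy
    obtain ⟨a, b, rfl⟩ := Submodule.mem_span_pair.mp hx
    obtain ⟨c, d, rfl⟩ := Submodule.mem_span_pair.mp hy
    refine Submodule.mem_span_pair.mpr
      ⟨a * c + b * d * ((n:R) - 1), a * d + b * c + b * d * ((n:R) - 2), ?_⟩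
    rw [add_mul, mul_add, mul_add, smul_mul_smul_comm, smul_mul_smul_comm,
      smul_mul_smul_comm, smul_mul_smul_comm, one_mul, mul_one, one_mul, hAsq]
    module
  set S : Subalgebra R (Matrix (Fin n) (Fin n) R) :=
    (Submodule.span R {(1:Matrix (Fin n) (Fin n) R), A}).toSubalgebra h1mem hmulmem with hSdef
  have hadj : Algebra.adjoin R {A} = S := by
    apply le_antisymm
    · apply Algebra.adjoin_le
      intro x hx
      rw [Set.mem_singleton_iff] at hx
      subst hx
      exact hAmem
    · intro x hx
      have hx' : x ∈ Submodule.span R {(1:Matrix (Fin n) (Fin n) R), A} := hx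
      obtain ⟨a, b, rfl⟩ := Submodule.mem_span_pair.mp hx'
      exact add_mem (Subalgebra.smul_mem _ (one_mem _) a)
        (Subalgebra.smul_mem _ (Algebra.self_mem_adjoin_singleton R A) b)
  have part1 : Subalgebra.toSubmodule (Algebra.adjoin R {A}) =
      Submodule.span R {(1:Matrix (Fin n) (Fin n) R), A} := by
    rw [hadj]; rfl
  refine ⟨part1, ?_⟩
  -- part 2
  have hJmem : J ∈ Algebra.adjoin R {A} := by
    have : J = A + 1 := by rw [hAdef, sub_add_cancel]
    rw [this]
    exact add_mem (Algebra.self_mem_adjoin_singleton R A) (one_mem _)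
  set j : Algebra.adjoin R {A} := ⟨J, hJmem⟩ with hjdef
  set f : R[X] →ₐ[R] Algebra.adjoin R {A} := aeval j with hfdef
  have hroot : f (X * (X - C (n:R))) = 0 := by
    apply Subtype.ext
    have : ((f (X * (X - C (n:R)))) : Matrix (Fin n) (Fin n) R)
        = aeval J (X * (X - C (n:R))) := aeval_subalgebra_coe _ _ _
    rw [this]
    simp only [map_mul, map_sub, aeval_X, aeval_C, Algebra.algebraMap_eq_smul_one,
      Subalgebra.coe_zero]
    rw [mul_sub, mul_smul_comm, mul_one, hJJ, sub_self]
  have hker : RingHom.ker f = Ideal.span {X * (X - C (n:R))} := by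
    have hmonic : (X * (X - C (n:R))).Monic := monic_X.mul (monic_X_sub_C _)
    ext p
    simp only [RingHom.mem_ker, Ideal.mem_span_singleton]
    constructor
    · intro hp
      rw [← modByMonic_eq_zero_iff_dvd hmonic]
      set r := p %ₘ (X * (X - C (n:R))) with hrdef
      have hrep : r + (X * (X - C (n:R))) * (p /ₘ (X * (X - C (n:R)))) = p :=
        modByMonic_add_div p _
      have hfr : f r = 0 := by
        have := congrArg f hrep
        rw [map_add, map_mul, hroot, zero_mul, add_zero, hp] at this
        exact this
      have hdeg : r.degree ≤ 1 := by
        have h2 : (X * (X - C (n:R))).degree = 2 := by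
          rw [(monic_X_sub_C ((n:R))).degree_mul, degree_X, degree_X_sub_C]; rfl
        have := degree_modByMonic_lt p hmonic
        rw [h2] at this
        exact Order.le_of_lt_succ (by exact_mod_cast this)
      obtain hr := eq_X_add_C_of_degree_le_one hdeg
      have hval : (r.coeff 0) • (1 : Matrix (Fin n) (Fin n) R) + (r.coeff 1) • J = 0 := by
        have hc : ((f r : Algebra.adjoin R {A}) : Matrix (Fin n) (Fin n) R) = aeval J r :=
          aeval_subalgebra_coe _ _ _
        rw [hfr] at hc
        have : aeval J r = (r.coeff 1) • J + (r.coeff 0) • (1 : Matrix (Fin n) (Fin n) R) := by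
          conv_lhs => rw [hr]
          simp [Algebra.algebraMap_eq_smul_one, smul_mul_assoc]
        rw [this] at hc
        rw [add_comm]
        exact hc.symm
      obtain ⟨h0, h1⟩ := linindep R n hn _ _ hval
      rw [hr, h0, h1]
      simp
    · rintro ⟨q, rfl⟩
      rw [map_mul, hroot, zero_mul]
  have hsurj : Function.Surjective f := by
    intro y
    have hy : (y : Matrix (Fin n) (Fin n) R) ∈ Submodule.span R {(1:Matrix (Fin n) (Fin n) R), A} := by
      have h2 : (y : Matrix (Fin n) (Fin n) R) ∈ Subalgebra.toSubmodule (Algebra.adjoin R {A}) := y.2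
      rwa [part1] at h2
    obtain ⟨a, b, hab⟩ := Submodule.mem_span_pair.mp hy
    refine ⟨C a + C b * (X - 1), ?_⟩
    apply Subtype.ext
    have : ((f (C a + C b * (X - 1))) : Matrix (Fin n) (Fin n) R)
        = aeval J (C a + C b * (X - 1)) := aeval_subalgebra_coe _ _ _
    rw [this, ← hab]
    simp only [map_add, map_mul, map_sub, aeval_C, aeval_X, map_one]
    rw [hAdef]
    simp [Algebra.algebraMap_eq_smul_one, smul_mul_assoc, mul_sub, smul_sub]
  exact ⟨(Ideal.quotientEquivAlgOfEq R hker.symm).trans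
    (Ideal.quotientKerAlgEquivOfSurjective hsurj)⟩
end

section
/- Let Λ₁ and Λ₂ be rings whose underlying additive groups are free ℤ-modules of finite rank, and for a ring Λ and positive integer N let a_N(Λ) denote the number of left ideals I of Λ for which the quotient Λ/I has exactly N elements. Then for every positive integer N, a_N(Λ₁ × Λ₂) = Σ_{d | N} a_d(Λ₁) · a_{N/d}(Λ₂), where the sum runs over positive divisors d of N. -/
/-- `a_N(Λ)`: the number of left ideals `I` of the ring `Λ` such that the
quotient `Λ/I` has exactly `N` elements. -/
noncomputable def leftIdealCount (Λ : Type*) [Ring Λ] (N : ℕ) : ℕ :=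
  Nat.card {I : Ideal Λ // Nat.card (Λ ⧸ I) = N}

open Ideal in
lemma card_quot_prod {R S : Type*} [Ring R] [Ring S] (I : Ideal R) (J : Ideal S) :
    Nat.card ((R × S) ⧸ Ideal.prod I J) = Nat.card (R ⧸ I) * Nat.card (S ⧸ J) := by
  let f : (R × S) →+ (R ⧸ I) × (S ⧸ J) :=
    AddMonoidHom.prodMap (Submodule.mkQ (I : Submodule R R)).toAddMonoidHom
      (Submodule.mkQ (J : Submodule S S)).toAddMonoidHom
  have hf : Function.Surjective f := by
    rw [AddMonoidHom.coe_prodMap]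
    exact Prod.map_surjective.mpr ⟨Submodule.mkQ_surjective _, Submodule.mkQ_surjective _⟩
  have hker : f.ker = (Ideal.prod I J).toAddSubgroup := by
    ext ⟨x, y⟩
    simp [f, AddMonoidHom.mem_ker, Prod.ext_iff, Ideal.mem_prod,
      Submodule.Quotient.mk_eq_zero]
  have h1 : Nat.card ((R × S) ⧸ Ideal.prod I J) = Nat.card ((R × S) ⧸ f.ker) := by
    rw [hker]; rfl
  rw [h1, Nat.card_congr (QuotientAddGroup.quotientKerEquivOfSurjective f hf).toEquiv,
    Nat.card_prod]

lemma finite_leftIdeals (Λ : Type*) [Ring Λ] [Module.Finite ℤ Λ] {d : ℕ} (hd : 0 < d) :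
    Finite {I : Ideal Λ // Nat.card (Λ ⧸ I) = d} := by
  classical
  set H : Submodule ℤ Λ := LinearMap.range ((d : ℤ) • (LinearMap.id : Λ →ₗ[ℤ] Λ)) with hH
  have hQfin : Finite (Λ ⧸ H) := by
    haveI : AddGroup.FG (Λ ⧸ H) := Module.Finite.iff_addGroup_fg.mp inferInstance
    apply AddCommGroup.finite_of_fg_torsion
    intro x
    obtain ⟨y, rfl⟩ := Submodule.mkQ_surjective H x
    rw [isOfFinAddOrder_iff_nsmul_eq_zero]
    refine ⟨d, hd, ?_⟩
    rw [← map_nsmul, Submodule.mkQ_apply, Submodule.Quotient.mk_eq_zero]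
    exact ⟨y, by simp⟩
  haveI : Finite (Submodule ℤ (Λ ⧸ H)) :=
    Finite.of_injective (fun p => (p : Set (Λ ⧸ H))) SetLike.coe_injective
  have key : ∀ I : {I : Ideal Λ // Nat.card (Λ ⧸ I) = d},
      H ≤ (I : Ideal Λ).restrictScalars ℤ := by
    rintro ⟨I, hI⟩ x ⟨y, rfl⟩
    haveI : Finite (Λ ⧸ I) := Nat.finite_of_card_ne_zero (by rw [hI]; exact hd.ne')
    have h0 : d • (Submodule.Quotient.mk y : Λ ⧸ I) = 0 := by
      rw [← hI]; exact card_nsmul_eq_zero'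
    rw [← Submodule.Quotient.mk_smul] at h0
    simpa using (Submodule.Quotient.mk_eq_zero I).mp h0
  apply Finite.of_injective
    (fun I : {I : Ideal Λ // Nat.card (Λ ⧸ I) = d} =>
      Submodule.map H.mkQ ((I : Ideal Λ).restrictScalars ℤ))
  rintro I I' h
  have := congrArg (Submodule.comap H.mkQ) h
  rw [Submodule.comap_map_mkQ, Submodule.comap_map_mkQ,
    sup_eq_right.mpr (key I), sup_eq_right.mpr (key I')] at this
  exact Subtype.ext (Submodule.restrictScalars_injective ℤ _ _ this)

/-- Let `Λ₁`, `Λ₂` be rings whose additive groups are free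
`ℤ`-modules of finite rank.  Then for every positive integer `N`,
`a_N(Λ₁ × Λ₂) = ∑_{d ∣ N} a_d(Λ₁) · a_{N/d}(Λ₂)`. -/
theorem stmt12 (Λ₁ Λ₂ : Type*) [Ring Λ₁] [Ring Λ₂]
    [Module.Free ℤ Λ₁] [Module.Finite ℤ Λ₁]
    [Module.Free ℤ Λ₂] [Module.Finite ℤ Λ₂]
    (N : ℕ) (hN : 0 < N) :
    leftIdealCount (Λ₁ × Λ₂) N =
      ∑ d ∈ N.divisors, leftIdealCount Λ₁ d * leftIdealCount Λ₂ (N / d) := by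
  classical
  have e1 : {I : Ideal (Λ₁ × Λ₂) // Nat.card ((Λ₁ × Λ₂) ⧸ I) = N} ≃
      {p : Ideal Λ₁ × Ideal Λ₂ //
        Nat.card (Λ₁ ⧸ p.1) * Nat.card (Λ₂ ⧸ p.2) = N} :=
    Equiv.subtypeEquiv Ideal.idealProdEquiv.toEquiv (fun I => by
      have h : Nat.card ((Λ₁ × Λ₂) ⧸ I) =
          Nat.card (Λ₁ ⧸ (Ideal.idealProdEquiv I).1) *
            Nat.card (Λ₂ ⧸ (Ideal.idealProdEquiv I).2) := by
        conv_lhs => rw [Ideal.ideal_prod_eq I]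
        exact card_quot_prod _ _
      rw [h]; rfl)
  have e2 : {p : Ideal Λ₁ × Ideal Λ₂ //
        Nat.card (Λ₁ ⧸ p.1) * Nat.card (Λ₂ ⧸ p.2) = N} ≃
      Σ d : N.divisors, {I : Ideal Λ₁ // Nat.card (Λ₁ ⧸ I) = (d : ℕ)} ×
        {J : Ideal Λ₂ // Nat.card (Λ₂ ⧸ J) = N / (d : ℕ)} :=
    { toFun := fun p => by
        refine ⟨⟨Nat.card (Λ₁ ⧸ p.1.1),
          Nat.mem_divisors.mpr ⟨⟨_, p.2.symm⟩, hN.ne'⟩⟩, ⟨p.1.1, rfl⟩, ⟨p.1.2, ?_⟩⟩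
        have h1 : 0 < Nat.card (Λ₁ ⧸ p.1.1) :=
          Nat.pos_of_ne_zero (left_ne_zero_of_mul (by rw [p.2]; exact hN.ne'))
        exact Nat.eq_div_of_mul_eq_right h1.ne' p.2
      invFun := fun x =>
        ⟨(x.2.1.1, x.2.2.1), by
          obtain ⟨⟨d, hd⟩, ⟨I, hI⟩, ⟨J, hJ⟩⟩ := x
          rw [hI, hJ]
          exact Nat.mul_div_cancel' (Nat.mem_divisors.mp hd).1⟩
      left_inv := fun _ => rfl
      right_inv := by
        rintro ⟨⟨d, hd⟩, ⟨I, hI⟩, ⟨J, hJ⟩⟩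
        obtain rfl : Nat.card (Λ₁ ⧸ I) = d := hI
        rfl }
  haveI hFin : ∀ d : N.divisors,
      Finite ({I : Ideal Λ₁ // Nat.card (Λ₁ ⧸ I) = (d : ℕ)} ×
        {J : Ideal Λ₂ // Nat.card (Λ₂ ⧸ J) = N / (d : ℕ)}) := by
    rintro ⟨d, hd⟩
    have hd0 : 0 < d := Nat.pos_of_mem_divisors hd
    have hNd : 0 < N / d :=
      Nat.div_pos (Nat.le_of_dvd hN (Nat.mem_divisors.mp hd).1) hd0
    haveI := finite_leftIdeals Λ₁ hd0
    haveI := finite_leftIdeals Λ₂ hNd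
    infer_instance
  haveI : ∀ d : N.divisors,
      Fintype ({I : Ideal Λ₁ // Nat.card (Λ₁ ⧸ I) = (d : ℕ)} ×
        {J : Ideal Λ₂ // Nat.card (Λ₂ ⧸ J) = N / (d : ℕ)}) :=
    fun d => Fintype.ofFinite _
  unfold leftIdealCount
  calc Nat.card {I : Ideal (Λ₁ × Λ₂) // Nat.card ((Λ₁ × Λ₂) ⧸ I) = N}
      = Nat.card (Σ d : N.divisors, {I : Ideal Λ₁ // Nat.card (Λ₁ ⧸ I) = (d : ℕ)} ×
          {J : Ideal Λ₂ // Nat.card (Λ₂ ⧸ J) = N / (d : ℕ)}) :=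
        Nat.card_congr (e1.trans e2)
    _ = ∑ d : N.divisors, Nat.card ({I : Ideal Λ₁ // Nat.card (Λ₁ ⧸ I) = (d : ℕ)} ×
          {J : Ideal Λ₂ // Nat.card (Λ₂ ⧸ J) = N / (d : ℕ)}) := by
        rw [Nat.card_eq_fintype_card, Fintype.card_sigma]
        exact Finset.sum_congr rfl fun d _ => (Nat.card_eq_fintype_card).symm
    _ = ∑ d : N.divisors,
          Nat.card {I : Ideal Λ₁ // Nat.card (Λ₁ ⧸ I) = (d : ℕ)} *
            Nat.card {J : Ideal Λ₂ // Nat.card (Λ₂ ⧸ J) = N / (d : ℕ)} :=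
        Finset.sum_congr rfl fun d _ => Nat.card_prod _ _
    _ = ∑ d ∈ N.divisors,
          Nat.card {I : Ideal Λ₁ // Nat.card (Λ₁ ⧸ I) = d} *
            Nat.card {J : Ideal Λ₂ // Nat.card (Λ₂ ⧸ J) = N / d} :=
        Finset.sum_coe_sort N.divisors
          (fun d => Nat.card {I : Ideal Λ₁ // Nat.card (Λ₁ ⧸ I) = d} *
            Nat.card {J : Ideal Λ₂ // Nat.card (Λ₂ ⧸ J) = N / d})
end

section
/- Let Λ be a ring whose underlying additive group is a free ℤ-module of finite rank, and for a positive integer N let a_N(Λ) denote the number of left ideals I of Λ for which Λ/I has exactly N elements. Then the function N ↦ a_N(Λ) is multiplicative on coprime arguments: for all positive integers m and n with gcd(m,n) = 1, a_{mn}(Λ) = a_m(Λ) · a_n(Λ). -/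
section Aux

open Submodule

/-- Bézout combination for coprime naturals, in any additive group. -/
lemma bezout_smul {G : Type*} [AddCommGroup G] {m n : ℕ} (h : Nat.gcd m n = 1) (x : G) :
    ∃ a b : ℤ, x = a • (m • x) + b • (n • x) := by
  refine ⟨Nat.gcdA m n, Nat.gcdB m n, ?_⟩
  have hb : (m : ℤ) * Nat.gcdA m n + (n : ℤ) * Nat.gcdB m n = 1 := by
    have := Nat.gcd_eq_gcd_ab m n
    rw [h] at this
    exact_mod_cast this.symm
  calc x = (1 : ℤ) • x := (one_zsmul x).symm
    _ = ((m : ℤ) * Nat.gcdA m n + (n : ℤ) * Nat.gcdB m n) • x := by rw [hb]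
    _ = _ := by
        rw [add_smul, mul_comm (m : ℤ), mul_comm (n : ℤ), mul_smul, mul_smul,
          natCast_zsmul, natCast_zsmul]

variable {Λ : Type*} [Ring Λ]

lemma nsmul_mem_of_card {J : Ideal Λ} {m : ℕ} (hJ : Nat.card (Λ ⧸ J) = m) (x : Λ) :
    m • x ∈ J := by
  have h0 : m • (Submodule.Quotient.mk x : Λ ⧸ J) = 0 := by
    rw [← hJ]; exact card_nsmul_eq_zero'
  have hmk : (Submodule.Quotient.mk (m • x) : Λ ⧸ J) = m • (Submodule.Quotient.mk x) :=
    map_nsmul (J.mkQ) m x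
  rw [← Submodule.Quotient.mk_eq_zero, hmk]
  exact h0

lemma cast_mem_of_card {J : Ideal Λ} {m : ℕ} (hJ : Nat.card (Λ ⧸ J) = m) :
    ((m : ℕ) : Λ) ∈ J := by
  have := nsmul_mem_of_card hJ (1 : Λ)
  rwa [nsmul_eq_mul, mul_one] at this

/-- CRT equivalence for submodules. -/
noncomputable def crtEquiv {R M : Type*} [Ring R] [AddCommGroup M] [Module R M]
    (J K : Submodule R M) (h : J ⊔ K = ⊤) :
    (M ⧸ (J ⊓ K)) ≃ₗ[R] (M ⧸ J) × (M ⧸ K) := by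
  have hker : LinearMap.ker ((J.mkQ).prod K.mkQ) = J ⊓ K := by
    rw [LinearMap.ker_prod, Submodule.ker_mkQ, Submodule.ker_mkQ]
  refine LinearEquiv.ofBijective
    ((J ⊓ K).liftQ ((J.mkQ).prod K.mkQ) (le_of_eq hker.symm)) ⟨?_, ?_⟩
  · rw [← LinearMap.ker_eq_bot]
    exact Submodule.ker_liftQ_eq_bot _ _ _ (le_of_eq hker)
  · rintro ⟨a, b⟩
    obtain ⟨x, rfl⟩ := J.mkQ_surjective a
    obtain ⟨y, rfl⟩ := K.mkQ_surjective b
    have hxy : x - y ∈ J ⊔ K := h ▸ Submodule.mem_top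
    obtain ⟨j, hj, k, hk, hjk⟩ := Submodule.mem_sup.mp hxy
    refine ⟨Submodule.Quotient.mk (x - j), ?_⟩
    rw [Submodule.liftQ_apply]
    refine Prod.ext ?_ ?_
    · show J.mkQ (x - j) = J.mkQ x
      rw [Submodule.mkQ_apply, Submodule.mkQ_apply, Submodule.Quotient.eq]
      simpa using J.neg_mem hj
    · show K.mkQ (x - j) = K.mkQ y
      rw [Submodule.mkQ_apply, Submodule.mkQ_apply, Submodule.Quotient.eq]
      have hx : x - j - y = k := by
        rw [show x - j - y = (x - y) - j by abel, ← hjk, add_sub_cancel_left]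
      rw [hx]; exact hk

lemma crt_card {R M : Type*} [Ring R] [AddCommGroup M] [Module R M]
    (J K : Submodule R M) (h : J ⊔ K = ⊤) :
    Nat.card (M ⧸ (J ⊓ K)) = Nat.card (M ⧸ J) * Nat.card (M ⧸ K) := by
  rw [Nat.card_congr (crtEquiv J K h).toEquiv, Nat.card_prod]

lemma sup_eq_top_of_coprime {J K : Ideal Λ} {m n : ℕ} (h : Nat.gcd m n = 1)
    (hmJ : ((m : ℕ) : Λ) ∈ J) (hnK : ((n : ℕ) : Λ) ∈ K) : J ⊔ K = ⊤ := by
  rw [Ideal.eq_top_iff_one]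
  obtain ⟨a, b, hab⟩ := bezout_smul h (1 : Λ)
  rw [hab]
  refine add_mem (zsmul_mem (Submodule.mem_sup_left ?_) _)
    (zsmul_mem (Submodule.mem_sup_right ?_) _)
  · rwa [nsmul_eq_mul, mul_one]
  · rwa [nsmul_eq_mul, mul_one]

lemma finite_quotient_of_le {p q : Ideal Λ} (hpq : p ≤ q) [Finite (Λ ⧸ p)] :
    Finite (Λ ⧸ q) := by
  refine Finite.of_surjective (Submodule.mapQ p q LinearMap.id hpq) ?_
  intro y
  obtain ⟨x, rfl⟩ := q.mkQ_surjective y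
  exact ⟨Submodule.Quotient.mk x, rfl⟩

lemma card_quotient_dvd_of_le {p q : Ideal Λ} (hpq : p ≤ q) :
    Nat.card (Λ ⧸ q) ∣ Nat.card (Λ ⧸ p) := by
  refine AddSubgroup.card_dvd_of_surjective
    (Submodule.mapQ p q LinearMap.id hpq).toAddMonoidHom ?_
  intro y
  obtain ⟨x, rfl⟩ := q.mkQ_surjective y
  exact ⟨Submodule.Quotient.mk x, rfl⟩

/-- A finite additive group annihilated by `m` has order coprime to anything coprime to `m`. -/
lemma card_coprime_of_nsmul {G : Type*} [AddCommGroup G] [Finite G] {m n : ℕ}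
    (hmn : Nat.gcd m n = 1) (hexp : ∀ x : G, m • x = 0) : Nat.Coprime (Nat.card G) n := by
  by_contra hc
  set p := (Nat.gcd (Nat.card G) n).minFac with hp
  have hpp : p.Prime := Nat.minFac_prime hc
  have h1 : p ∣ Nat.card G := (Nat.minFac_dvd _).trans (Nat.gcd_dvd_left _ _)
  have h2 : p ∣ n := (Nat.minFac_dvd _).trans (Nat.gcd_dvd_right _ _)
  haveI : Fact p.Prime := ⟨hpp⟩
  obtain ⟨x, hx⟩ := exists_prime_addOrderOf_dvd_card' (G := G) p h1
  have hpm : p ∣ m := hx ▸ addOrderOf_dvd_of_nsmul_eq_zero (hexp x)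
  have := Nat.dvd_gcd hpm h2
  rw [hmn] at this
  exact hpp.ne_one (Nat.dvd_one.mp this)

lemma nsmul_mem_of_mem_sup_span {I : Ideal Λ} {p q : ℕ} (hpq : ((p * q : ℕ) : Λ) ∈ I)
    {x : Λ} (hx : x ∈ I ⊔ Ideal.span {((q : ℕ) : Λ)}) : p • x ∈ I := by
  obtain ⟨i, hi, s, hs, rfl⟩ := Submodule.mem_sup.mp hx
  obtain ⟨c, rfl⟩ := Submodule.mem_span_singleton.mp hs
  rw [smul_add]
  refine add_mem (nsmul_mem hi p) ?_
  have hps : p • (c • ((q : ℕ) : Λ)) = c * ((p * q : ℕ) : Λ) := by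
    rw [smul_eq_mul, nsmul_eq_mul, Nat.cast_mul, ← mul_assoc, (Nat.cast_commute p c).eq,
      mul_assoc]
  rw [hps]
  exact Ideal.mul_mem_left _ c hpq

lemma inf_sup_span_eq {m n : ℕ} (h : Nat.gcd m n = 1) {I : Ideal Λ}
    (hmn : ((m * n : ℕ) : Λ) ∈ I) :
    (I ⊔ Ideal.span {((m : ℕ) : Λ)}) ⊓ (I ⊔ Ideal.span {((n : ℕ) : Λ)}) = I := by
  refine le_antisymm ?_ (le_inf le_sup_left le_sup_left)
  intro x hx
  obtain ⟨hxm, hxn⟩ := Submodule.mem_inf.mp hx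
  have hmx : m • x ∈ I := nsmul_mem_of_mem_sup_span hmn hxn
  have hnx : n • x ∈ I := nsmul_mem_of_mem_sup_span (by rwa [Nat.mul_comm m n] at hmn) hxm
  obtain ⟨a, b, hab⟩ := bezout_smul h x
  rw [hab]
  exact add_mem (zsmul_mem hmx a) (zsmul_mem hnx b)

lemma sup_span_of_cards {m n : ℕ} (h : Nat.gcd m n = 1) {J K : Ideal Λ}
    (hJ : Nat.card (Λ ⧸ J) = m) (hK : Nat.card (Λ ⧸ K) = n) :
    (J ⊓ K) ⊔ Ideal.span {((m : ℕ) : Λ)} = J := by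
  refine le_antisymm (sup_le inf_le_left ?_) ?_
  · rw [Ideal.span_le, Set.singleton_subset_iff]
    exact cast_mem_of_card hJ
  · intro x hx
    obtain ⟨a, b, hab⟩ := bezout_smul h x
    rw [hab]
    refine add_mem (zsmul_mem (Submodule.mem_sup_right ?_) a)
      (zsmul_mem (Submodule.mem_sup_left ?_) b)
    · rw [nsmul_eq_mul, (Nat.cast_commute m x).eq]
      exact Ideal.mul_mem_left _ x (Submodule.mem_span_singleton_self _)
    · exact Submodule.mem_inf.mpr ⟨nsmul_mem hx n, nsmul_mem_of_card hK x⟩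

lemma nsmul_quotient_sup_span_eq_zero (I : Ideal Λ) (m : ℕ)
    (x : Λ ⧸ (I ⊔ Ideal.span {((m : ℕ) : Λ)})) : m • x = 0 := by
  obtain ⟨y, rfl⟩ := (I ⊔ Ideal.span {((m : ℕ) : Λ)}).mkQ_surjective x
  rw [← map_nsmul, Submodule.mkQ_apply, Submodule.Quotient.mk_eq_zero]
  refine Submodule.mem_sup_right ?_
  rw [nsmul_eq_mul, (Nat.cast_commute m y).eq]
  exact Ideal.mul_mem_left _ y (Submodule.mem_span_singleton_self _)

lemma card_sup_span {m n : ℕ} (hm : 0 < m) (hn : 0 < n) (h : Nat.gcd m n = 1)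
    {I : Ideal Λ} (hI : Nat.card (Λ ⧸ I) = m * n) :
    Nat.card (Λ ⧸ (I ⊔ Ideal.span {((m : ℕ) : Λ)})) = m := by
  set J := I ⊔ Ideal.span {((m : ℕ) : Λ)} with hJdef
  set K := I ⊔ Ideal.span {((n : ℕ) : Λ)} with hKdef
  haveI : Finite (Λ ⧸ I) :=
    Nat.finite_of_card_ne_zero (by rw [hI]; exact (Nat.mul_pos hm hn).ne')
  haveI hFJ : Finite (Λ ⧸ J) := finite_quotient_of_le (le_sup_left : I ≤ J)
  haveI hFK : Finite (Λ ⧸ K) := finite_quotient_of_le (le_sup_left : I ≤ K)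
  have hmn1 : ((m * n : ℕ) : Λ) ∈ I := cast_mem_of_card hI
  have hsup : J ⊔ K = ⊤ :=
    sup_eq_top_of_coprime h
      (Submodule.mem_sup_right (Submodule.mem_span_singleton_self _))
      (Submodule.mem_sup_right (Submodule.mem_span_singleton_self _))
  have hinf : J ⊓ K = I := inf_sup_span_eq h hmn1
  have hcards : Nat.card (Λ ⧸ J) * Nat.card (Λ ⧸ K) = m * n := by
    rw [← crt_card J K hsup, hinf, hI]
  have hcopJ : Nat.Coprime (Nat.card (Λ ⧸ J)) n :=
    card_coprime_of_nsmul h (nsmul_quotient_sup_span_eq_zero I m)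
  have hcopK : Nat.Coprime (Nat.card (Λ ⧸ K)) m :=
    card_coprime_of_nsmul (by rwa [Nat.gcd_comm] at h) (nsmul_quotient_sup_span_eq_zero I n)
  have hdJ : Nat.card (Λ ⧸ J) ∣ m :=
    hcopJ.dvd_of_dvd_mul_right ⟨Nat.card (Λ ⧸ K), hcards.symm⟩
  have hdK : Nat.card (Λ ⧸ K) ∣ n :=
    hcopK.dvd_of_dvd_mul_right ⟨Nat.card (Λ ⧸ J), by rw [Nat.mul_comm n m, ← hcards, Nat.mul_comm]⟩
  have hmd : m ∣ Nat.card (Λ ⧸ J) := by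
    have h1 : m * n ∣ Nat.card (Λ ⧸ J) * n := by
      rw [← hcards]
      exact mul_dvd_mul_left _ hdK
    exact (Nat.mul_dvd_mul_iff_right hn).mp h1
  exact Nat.dvd_antisymm hdJ hmd

end Aux

/-- Let `Λ` be a ring whose additive group is a free
`ℤ`-module of finite rank.  Then `N ↦ a_N(Λ)` is multiplicative on coprime
arguments: for positive coprime `m`, `n` one has `a_{mn}(Λ) = a_m(Λ)·a_n(Λ)`. -/
theorem stmt13 (Λ : Type*) [Ring Λ] [Module.Free ℤ Λ] [Module.Finite ℤ Λ]
    (m n : ℕ) (hm : 0 < m) (hn : 0 < n) (h : Nat.gcd m n = 1) :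
    leftIdealCount Λ (m * n) = leftIdealCount Λ m * leftIdealCount Λ n := by
  have h' : Nat.gcd n m = 1 := by rwa [Nat.gcd_comm] at h
  unfold leftIdealCount
  rw [← Nat.card_prod]
  refine Nat.card_congr ?_
  refine
    { toFun := fun I =>
        (⟨I.1 ⊔ Ideal.span {((m : ℕ) : Λ)}, card_sup_span hm hn h I.2⟩,
         ⟨I.1 ⊔ Ideal.span {((n : ℕ) : Λ)},
            card_sup_span hn hm h' (I.2.trans (Nat.mul_comm m n))⟩)
      invFun := fun JK =>
        ⟨JK.1.1 ⊓ JK.2.1, by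
          have hsup : JK.1.1 ⊔ JK.2.1 = ⊤ :=
            sup_eq_top_of_coprime h (cast_mem_of_card JK.1.2) (cast_mem_of_card JK.2.2)
          rw [crt_card _ _ hsup, JK.1.2, JK.2.2]⟩
      left_inv := ?_
      right_inv := ?_ }
  · rintro ⟨I, hI⟩
    exact Subtype.ext (inf_sup_span_eq h (cast_mem_of_card hI))
  · rintro ⟨⟨J, hJ⟩, ⟨K, hK⟩⟩
    refine Prod.ext (Subtype.ext ?_) (Subtype.ext ?_)
    · exact sup_span_of_cards h hJ hK
    · show (J ⊓ K) ⊔ Ideal.span {((n : ℕ) : Λ)} = K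
      rw [inf_comm]
      exact sup_span_of_cards h' hK hJ
end

section
/- Let Λ be a ring whose underlying additive group is a free ℤ-module of finite rank, let p be a prime, and let ℤ_p denote the ring of p-adic integers. Then for every natural number k, the number of left ideals of Λ of index p^k equals the number of left ideals of the ℤ_p-algebra ℤ_p ⊗_ℤ Λ of index p^k. -/
open scoped TensorProduct

section Aux

variable {R S : Type*} [Ring R] [Ring S]

/-- For surjective `f`, the quotient by `comap f J` has the same cardinality as the
quotient by `J`. -/
lemma quot_card_comap (f : R →+* S) (hf : Function.Surjective f) (J : Ideal S) :
    Nat.card (R ⧸ Ideal.comap f J) = Nat.card (S ⧸ J) := by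
  have hwd : ∀ (a b : R), @Setoid.r R (Submodule.quotientRel (Ideal.comap f J)) a b →
      (Submodule.Quotient.mk (f a) : S ⧸ J) = Submodule.Quotient.mk (f b) := by
    intro a b h
    have h1 : (Submodule.Quotient.mk a : R ⧸ Ideal.comap f J) = Submodule.Quotient.mk b :=
      Quotient.sound' h
    have h2 : a - b ∈ Ideal.comap f J := (Submodule.Quotient.eq _).mp h1
    refine (Submodule.Quotient.eq _).mpr ?_
    rw [← map_sub]
    exact h2
  refine Nat.card_congr (Equiv.ofBijective
    (fun z => Quotient.liftOn' z (fun a => (Submodule.Quotient.mk (f a) : S ⧸ J)) hwd)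
    ⟨?_, ?_⟩)
  · intro z w h
    obtain ⟨a, rfl⟩ := Submodule.Quotient.mk_surjective _ z
    obtain ⟨b, rfl⟩ := Submodule.Quotient.mk_surjective _ w
    have h' : (Submodule.Quotient.mk (f a) : S ⧸ J) = Submodule.Quotient.mk (f b) := h
    have hJ : f a - f b ∈ J := (Submodule.Quotient.eq _).mp h'
    refine (Submodule.Quotient.eq _).mpr ?_
    rw [Ideal.mem_comap, map_sub]
    exact hJ
  · intro w
    obtain ⟨s, rfl⟩ := Submodule.Quotient.mk_surjective _ w
    obtain ⟨a, rfl⟩ := hf s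
    exact ⟨Submodule.Quotient.mk a, rfl⟩

/-- If `f : R →+* S` is surjective and every left ideal of `R` of index `N` contains `ker f`,
then `R` and `S` have the same number of left ideals of index `N`. -/
lemma leftIdealCount_eq_of_surjective (f : R →+* S) (hf : Function.Surjective f) (N : ℕ)
    (H : ∀ I : Ideal R, Nat.card (R ⧸ I) = N → RingHom.ker f ≤ I) :
    leftIdealCount R N = leftIdealCount S N := by
  have hcm : ∀ I : Ideal R, RingHom.ker f ≤ I → Ideal.comap f (Ideal.map f I) = I := by
    intro I hI
    rw [Ideal.comap_map_of_surjective f hf]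
    exact sup_eq_left.mpr (by rwa [← RingHom.ker_eq_comap_bot])
  refine Nat.card_congr
    ⟨fun I => ⟨Ideal.map f I.1, ?_⟩,
     fun J => ⟨Ideal.comap f J.1, by rw [quot_card_comap f hf]; exact J.2⟩, ?_, ?_⟩
  · rw [← quot_card_comap f hf (Ideal.map f I.1), hcm I.1 (H I.1 I.2)]
    exact I.2
  · intro I
    exact Subtype.ext (hcm I.1 (H I.1 I.2))
  · intro J
    exact Subtype.ext (Ideal.map_comap_of_surjective f hf J.1)

/-- Any left ideal of index `N` contains `N`, hence the left ideal generated by `N`. -/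
lemma span_natCast_le {A : Type*} [Ring A] {N : ℕ} (I : Ideal A)
    (hI : Nat.card (A ⧸ I) = N) : Ideal.span {(N : A)} ≤ I := by
  rw [Ideal.span_le, Set.singleton_subset_iff]
  have h0 : (Submodule.Quotient.mk (N : A) : A ⧸ I) = 0 := by
    have h1 : (N : A) = N • (1 : A) := by simp
    have h2 : (Submodule.Quotient.mk (N • (1 : A)) : A ⧸ I)
        = N • (Submodule.Quotient.mk (1 : A) : A ⧸ I) := by
      have := map_nsmul I.mkQ N (1 : A)
      simpa [Submodule.mkQ_apply] using this
    rw [h1, h2, ← hI, card_nsmul_eq_zero']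
  exact (Submodule.Quotient.mk_eq_zero I).mp h0

end Aux

set_option maxHeartbeats 2000000 in
/-- Let `Λ` be a ring whose additive group is a free
`ℤ`-module of finite rank, `p` a prime, and `ℤ_[p]` the `p`-adic integers.
Then for every `k : ℕ`, the number of left ideals of `Λ` of index `p^k`
equals the number of left ideals of `ℤ_[p] ⊗[ℤ] Λ` of index `p^k`. -/
theorem stmt14 (Λ : Type*) [Ring Λ] [Module.Free ℤ Λ] [Module.Finite ℤ Λ]
    (p : ℕ) [Fact p.Prime] (k : ℕ) :
    leftIdealCount Λ (p ^ k) = leftIdealCount (ℤ_[p] ⊗[ℤ] Λ) (p ^ k) := by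
  classical
  haveI : NeZero (p ^ k) := ⟨pow_ne_zero _ (Fact.out : p.Prime).ne_zero⟩
  -- p^k vanishes in Q
  have hQ0 : ((p ^ k : ℕ) : ZMod (p ^ k) ⊗[ℤ] Λ) = 0 := by
    rw [← map_natCast (Algebra.TensorProduct.includeLeft : ZMod (p ^ k) →ₐ[ℤ] ZMod (p ^ k) ⊗[ℤ] Λ),
      ZMod.natCast_self, map_zero]
  -- the right inclusion Λ → Q and its surjectivity
  set incR : Λ →+* ZMod (p ^ k) ⊗[ℤ] Λ := (Algebra.TensorProduct.includeRight : Λ →ₐ[ℤ] ZMod (p ^ k) ⊗[ℤ] Λ).toRingHom with hincR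
  have hincR_apply : ∀ x : Λ, incR x = (1 : ZMod (p ^ k)) ⊗ₜ[ℤ] x := fun x => rfl
  have hsurj1 : ∀ z : ZMod (p ^ k) ⊗[ℤ] Λ, ∃ r : Λ, (1 : ZMod (p ^ k)) ⊗ₜ[ℤ] r = z := by
    intro z
    induction z using TensorProduct.induction_on with
    | zero => exact ⟨0, by simp [TensorProduct.tmul_zero]⟩
    | tmul a x =>
      refine ⟨(a.val : ℤ) • x, ?_⟩
      rw [← TensorProduct.smul_tmul]
      congr 1
      rw [zsmul_one, Int.cast_natCast, ZMod.natCast_val, ZMod.cast_id]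
    | add z₁ z₂ h₁ h₂ =>
      obtain ⟨r₁, hr₁⟩ := h₁
      obtain ⟨r₂, hr₂⟩ := h₂
      exact ⟨r₁ + r₂, by rw [TensorProduct.tmul_add, hr₁, hr₂]⟩
  have hincR_surj : Function.Surjective incR := by
    intro z
    obtain ⟨r, hr⟩ := hsurj1 z
    exact ⟨r, hr⟩
  -- the kernel of the right inclusion is contained in p^k Λ (uses freeness)
  have hkerR : ∀ x : Λ, (1 : ZMod (p ^ k)) ⊗ₜ[ℤ] x = 0 →
      x ∈ Ideal.span {((p ^ k : ℕ) : Λ)} := by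
    intro x hx
    set b := Module.Free.chooseBasis ℤ Λ with hb
    have h := congrArg (Algebra.TensorProduct.basis (ZMod (p ^ k)) b).repr hx
    rw [Algebra.TensorProduct.basis_repr_tmul, one_smul, map_zero] at h
    have hdvd : ∀ i, ((p ^ k : ℕ) : ℤ) ∣ b.repr x i := by
      intro i
      have h' := DFunLike.congr_fun h i
      rw [Finsupp.mapRange_apply, algebraMap_int_eq, Finsupp.coe_zero, Pi.zero_apply] at h'
      exact (ZMod.intCast_zmod_eq_zero_iff_dvd _ _).mp h'
    set d : _ →₀ ℤ := (b.repr x).mapRange (fun v => v / ((p ^ k : ℕ) : ℤ)) (by simp) with hd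
    have hxd : x = ((p ^ k : ℕ) : ℤ) • (b.repr.symm d) := by
      apply b.repr.injective
      rw [map_smul, LinearEquiv.apply_symm_apply]
      ext i
      rw [Finsupp.smul_apply, hd, Finsupp.mapRange_apply, smul_eq_mul,
        Int.mul_ediv_cancel' (hdvd i)]
    refine Ideal.mem_span_singleton'.mpr ⟨b.repr.symm d, ?_⟩
    rw [hxd, zsmul_eq_mul, Int.cast_natCast]
    exact (Nat.cast_commute (p ^ k) (b.repr.symm d)).eq.symm
  -- the base-change map ψ : T → Q
  set ψ : ℤ_[p] ⊗[ℤ] Λ →ₐ[ℤ] ZMod (p ^ k) ⊗[ℤ] Λ :=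
    Algebra.TensorProduct.map (PadicInt.toZModPow k).toIntAlgHom (AlgHom.id ℤ Λ) with hψ
  have hψt : ∀ (a : ℤ_[p]) (x : Λ), ψ (a ⊗ₜ[ℤ] x) = (PadicInt.toZModPow k a) ⊗ₜ[ℤ] x := by
    intro a x
    rw [hψ]
    exact Algebra.TensorProduct.map_tmul _ _ _ _
  have hψ1 : ∀ x : Λ, ψ ((1 : ℤ_[p]) ⊗ₜ[ℤ] x) = (1 : ZMod (p ^ k)) ⊗ₜ[ℤ] x := by
    intro x
    rw [hψt, map_one]
  have hψsurj : Function.Surjective (ψ : ℤ_[p] ⊗[ℤ] Λ →+* ZMod (p ^ k) ⊗[ℤ] Λ) := by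
    intro q
    obtain ⟨r, hr⟩ := hsurj1 q
    exact ⟨(1 : ℤ_[p]) ⊗ₜ[ℤ] r, by rw [RingHom.coe_coe, hψ1, hr]⟩
  -- ψ kills the span of p^k
  have hψpk : ψ ((p ^ k : ℕ) : ℤ_[p] ⊗[ℤ] Λ) = 0 := by rw [map_natCast, hQ0]
  have hspan0 : ∀ w ∈ Ideal.span {((p ^ k : ℕ) : ℤ_[p] ⊗[ℤ] Λ)}, ψ w = 0 := by
    intro w hw
    obtain ⟨v, hv⟩ := Ideal.mem_span_singleton'.mp hw
    rw [← hv, map_mul, hψpk, mul_zero]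
  -- p^k as pure tensors in T
  have hpkL : ((p ^ k : ℕ) : ℤ_[p]) ⊗ₜ[ℤ] (1 : Λ) = ((p ^ k : ℕ) : ℤ_[p] ⊗[ℤ] Λ) := by
    rw [← Algebra.TensorProduct.includeLeft_apply (S := ℤ),
      map_natCast (Algebra.TensorProduct.includeLeft : ℤ_[p] →ₐ[ℤ] ℤ_[p] ⊗[ℤ] Λ)]
  have hpkR : (1 : ℤ_[p]) ⊗ₜ[ℤ] ((p ^ k : ℕ) : Λ) = ((p ^ k : ℕ) : ℤ_[p] ⊗[ℤ] Λ) := by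
    rw [← Algebra.TensorProduct.includeRight_apply,
      map_natCast (Algebra.TensorProduct.includeRight : Λ →ₐ[ℤ] ℤ_[p] ⊗[ℤ] Λ)]
  -- every element of T is congruent to 1 ⊗ r modulo p^k
  have claim : ∀ z : ℤ_[p] ⊗[ℤ] Λ, ∃ r : Λ,
      z - (1 : ℤ_[p]) ⊗ₜ[ℤ] r ∈ Ideal.span {((p ^ k : ℕ) : ℤ_[p] ⊗[ℤ] Λ)} := by
    intro z
    induction z using TensorProduct.induction_on with
    | zero => exact ⟨0, by simp [TensorProduct.tmul_zero]⟩
    | tmul a x =>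
      set n : ℕ := (PadicInt.toZModPow k a).val with hn
      have hmem : a - (n : ℤ_[p]) ∈ RingHom.ker (PadicInt.toZModPow k) := by
        rw [RingHom.mem_ker, map_sub, map_natCast, hn, ZMod.natCast_val, ZMod.cast_id, sub_self]
      rw [PadicInt.ker_toZModPow, Ideal.mem_span_singleton] at hmem
      obtain ⟨c, hc⟩ := hmem
      refine ⟨(n : ℤ) • x, ?_⟩
      have h1 : (n : ℤ_[p]) ⊗ₜ[ℤ] x = (1 : ℤ_[p]) ⊗ₜ[ℤ] ((n : ℤ) • x) := by
        rw [← TensorProduct.smul_tmul]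
        congr 1
        rw [zsmul_one, Int.cast_natCast]
      rw [← h1, ← TensorProduct.sub_tmul, hc]
      refine Ideal.mem_span_singleton'.mpr ⟨c ⊗ₜ[ℤ] x, ?_⟩
      rw [← hpkL, Algebra.TensorProduct.tmul_mul_tmul, mul_one, mul_comm c, Nat.cast_pow]
    | add z₁ z₂ h₁ h₂ =>
      obtain ⟨r₁, hr₁⟩ := h₁
      obtain ⟨r₂, hr₂⟩ := h₂
      refine ⟨r₁ + r₂, ?_⟩
      have heq : z₁ + z₂ - (1 : ℤ_[p]) ⊗ₜ[ℤ] (r₁ + r₂)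
          = (z₁ - (1 : ℤ_[p]) ⊗ₜ[ℤ] r₁) + (z₂ - (1 : ℤ_[p]) ⊗ₜ[ℤ] r₂) := by
        rw [TensorProduct.tmul_add]; abel
      rw [heq]
      exact add_mem hr₁ hr₂
  -- the kernel of ψ is contained in the span of p^k
  have hker : RingHom.ker (ψ : ℤ_[p] ⊗[ℤ] Λ →+* ZMod (p ^ k) ⊗[ℤ] Λ) ≤ Ideal.span {((p ^ k : ℕ) : ℤ_[p] ⊗[ℤ] Λ)} := by
    intro z hz
    obtain ⟨r, hr⟩ := claim z
    have hz0 : ψ z = 0 := hz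
    have h1r : ψ ((1 : ℤ_[p]) ⊗ₜ[ℤ] r) = 0 := by
      have hsplit : ψ ((1 : ℤ_[p]) ⊗ₜ[ℤ] r) = ψ z - ψ (z - (1 : ℤ_[p]) ⊗ₜ[ℤ] r) := by
        rw [map_sub]; abel
      rw [hsplit, hz0, hspan0 _ hr, sub_zero]
    have hrk : r ∈ Ideal.span {((p ^ k : ℕ) : Λ)} := by
      apply hkerR
      rw [← hψ1 r]
      exact h1r
    obtain ⟨b, hb⟩ := Ideal.mem_span_singleton'.mp hrk
    have hmem : (1 : ℤ_[p]) ⊗ₜ[ℤ] r ∈ Ideal.span {((p ^ k : ℕ) : ℤ_[p] ⊗[ℤ] Λ)} := by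
      refine Ideal.mem_span_singleton'.mpr ⟨(1 : ℤ_[p]) ⊗ₜ[ℤ] b, ?_⟩
      rw [← hpkR, Algebra.TensorProduct.tmul_mul_tmul, mul_one, hb]
    have := add_mem hr hmem
    rwa [sub_add_cancel] at this
  -- similarly the kernel of incR is contained in span of p^k in Λ
  have hkerR' : RingHom.ker incR ≤ Ideal.span {((p ^ k : ℕ) : Λ)} := by
    intro x hx
    exact hkerR x (by rw [← hincR_apply]; exact hx)
  -- assemble
  have e1 : leftIdealCount Λ (p ^ k) = leftIdealCount (ZMod (p ^ k) ⊗[ℤ] Λ) (p ^ k) :=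
    leftIdealCount_eq_of_surjective incR hincR_surj (p ^ k)
      (fun I hI => le_trans hkerR' (span_natCast_le I hI))
  have e2 : leftIdealCount (ℤ_[p] ⊗[ℤ] Λ) (p ^ k) = leftIdealCount (ZMod (p ^ k) ⊗[ℤ] Λ) (p ^ k) :=
    leftIdealCount_eq_of_surjective (ψ : ℤ_[p] ⊗[ℤ] Λ →+* ZMod (p ^ k) ⊗[ℤ] Λ) hψsurj (p ^ k)
      (fun J hJ => le_trans hker (span_natCast_le J hJ))
  exact e1.trans e2.symm
end

section
/- Let p be a prime, let Λ₁ and Λ₂ be rings whose underlying additive groups are free ℤ-modules of finite rank, and suppose there is an isomorphism of ℤ_p-algebras ℤ_p ⊗_ℤ Λ₂ ≅ S₁ × ⋯ × S_g for ℤ_p-algebras S₁, …, S_g. Then for every natural number m, the number of left ideals of ℤ_p ⊗_ℤ (Λ₁ ⊗_ℤ Λ₂) of index p^m equals Σ ∏_{k=1}^{g} a_{p^{m_k}}(S_k ⊗_{ℤ_p} (ℤ_p ⊗_ℤ Λ₁)), where the sum runs over all g-tuples (m₁, …, m_g) of natural numbers with m₁ + ⋯ + m_g = m, and a_N(Λ)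 denotes the number of left ideals of a ring Λ of index N. -/
set_option synthInstance.maxHeartbeats 1000000
set_option maxHeartbeats 4000000


open scoped TensorProduct

section
variable {Λ Λ' : Type*} [Ring Λ] [Ring Λ']

lemma quotCardComap (e : Λ ≃+* Λ') (I : Ideal Λ') :
    Nat.card (Λ ⧸ I.comap (e : Λ →+* Λ')) = Nat.card (Λ' ⧸ I) := by
  refine Nat.card_congr (Quotient.congr e.toEquiv ?_)
  intro a b
  rw [Submodule.quotientRel_def, Submodule.quotientRel_def, Ideal.mem_comap, map_sub]
  rfl

def idealComapEquiv (e : Λ ≃+* Λ') : Ideal Λ' ≃ Ideal Λ where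
  toFun I := I.comap (e : Λ →+* Λ')
  invFun I := I.comap (e.symm : Λ' →+* Λ)
  left_inv I := Ideal.ext fun x => by
    rw [Ideal.mem_comap, Ideal.mem_comap, RingEquiv.coe_toRingHom, RingEquiv.coe_toRingHom,
      RingEquiv.apply_symm_apply]
  right_inv I := Ideal.ext fun x => by
    rw [Ideal.mem_comap, Ideal.mem_comap, RingEquiv.coe_toRingHom, RingEquiv.coe_toRingHom,
      RingEquiv.symm_apply_apply]

lemma leftIdealCount_congr (e : Λ ≃+* Λ') (N : ℕ) :
    leftIdealCount Λ N = leftIdealCount Λ' N := by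
  unfold leftIdealCount
  refine (Nat.card_congr (Equiv.subtypeEquiv (idealComapEquiv e) fun I => ?_)).symm
  rw [show idealComapEquiv e I = I.comap (e : Λ →+* Λ') from rfl, quotCardComap e I]
end


section Pi
variable {g : ℕ} (R : Fin g → Type*) [∀ k, Ring (R k)]

/-- The ideal of a product ring built from componentwise ideals. -/
def piIdeal (J : ∀ k, Ideal (R k)) : Ideal (∀ k, R k) where
  carrier := {x | ∀ k, x k ∈ J k}
  add_mem' ha hb k := (J k).add_mem (ha k) (hb k)
  zero_mem' k := (J k).zero_mem
  smul_mem' r x hx k := (J k).smul_mem (r k) (hx k)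

@[simp] lemma mem_piIdeal_iff (J : ∀ k, Ideal (R k)) (x : ∀ k, R k) :
    x ∈ piIdeal R J ↔ ∀ k, x k ∈ J k := Iff.rfl

/-- The component ideal of an ideal of a product ring. -/
def compIdeal (I : Ideal (∀ k, R k)) (k : Fin g) : Ideal (R k) where
  carrier := {y | Pi.single k y ∈ I}
  add_mem' {a b} ha hb := by
    show Pi.single k (a + b) ∈ I
    rw [Pi.single_add]; exact I.add_mem ha hb
  zero_mem' := by show Pi.single k 0 ∈ I; rw [Pi.single_zero]; exact I.zero_mem
  smul_mem' r y hy := by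
    show Pi.single k (r * y) ∈ I
    rw [Pi.single_mul]
    exact I.smul_mem (Pi.single k r) hy

@[simp] lemma mem_compIdeal_iff (I : Ideal (∀ k, R k)) (k : Fin g) (y : R k) :
    y ∈ compIdeal R I k ↔ Pi.single k y ∈ I := Iff.rfl

lemma piIdeal_compIdeal (I : Ideal (∀ k, R k)) : piIdeal R (compIdeal R I) = I := by
  ext x
  rw [mem_piIdeal_iff]
  constructor
  · intro h
    have hx : x = ∑ k, Pi.single k (x k) := (Finset.univ_sum_single x).symm
    rw [hx]
    exact Submodule.sum_mem _ fun k _ => h k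
  · intro hx k
    rw [mem_compIdeal_iff]
    have : Pi.single k (x k) = Pi.single k (1 : R k) * x := by
      funext j
      rcases eq_or_ne j k with rfl | hj
      · simp
      · simp [Pi.single_eq_of_ne hj]
    rw [this]
    exact I.smul_mem (Pi.single k (1 : R k)) hx

lemma compIdeal_piIdeal (J : ∀ k, Ideal (R k)) (k : Fin g) :
    compIdeal R (piIdeal R J) k = J k := by
  ext y
  rw [mem_compIdeal_iff, mem_piIdeal_iff]
  constructor
  · intro h
    have := h k
    rwa [Pi.single_eq_same] at this
  · intro hy j
    rcases eq_or_ne j k with rfl | hj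
    · rwa [Pi.single_eq_same]
    · rw [Pi.single_eq_of_ne hj]
      exact (J j).zero_mem

lemma card_quot_piIdeal (J : ∀ k, Ideal (R k)) :
    Nat.card ((∀ k, R k) ⧸ piIdeal R J) = ∏ k, Nat.card (R k ⧸ J k) := by
  rw [← Nat.card_pi]
  refine Nat.card_congr (Equiv.ofBijective
    (fun q => Quotient.liftOn' q (fun x k => Submodule.Quotient.mk (x k)) ?_) ⟨?_, ?_⟩)
  · intro a b hab
    have h : a - b ∈ piIdeal R J := (Submodule.quotientRel_def _).mp hab
    funext k
    exact (Submodule.Quotient.eq (J k)).mpr (h k)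
  · intro q1 q2 h
    obtain ⟨x, rfl⟩ := Submodule.Quotient.mk_surjective _ q1
    obtain ⟨y, rfl⟩ := Submodule.Quotient.mk_surjective _ q2
    refine (Submodule.Quotient.eq _).mpr fun k => (Submodule.Quotient.eq (J k)).mp ?_
    exact congrFun h k
  · intro v
    choose x hx using fun k => Submodule.Quotient.mk_surjective (J k) (v k)
    exact ⟨Submodule.Quotient.mk x, funext hx⟩
end Pi


section Finiteness
variable {p : ℕ} [Fact p.Prime]

lemma finite_quot_span_pow (Λ : Type*) [Ring Λ] [Algebra ℤ_[p] Λ] [Module.Finite ℤ_[p] Λ]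
    (m : ℕ) : Finite (Λ ⧸ (Ideal.span {((p ^ m : ℕ) : Λ)} : Ideal Λ)) := by
  have hp : p.Prime := Fact.out
  haveI : NeZero (p ^ m) := ⟨pow_ne_zero m hp.ne_zero⟩
  set I₀ : Ideal Λ := Ideal.span {((p ^ m : ℕ) : Λ)} with hI₀
  -- the quotient is killed by `(p^m : ℤ_[p])`
  have key : ∀ q : Λ ⧸ I₀, ((p ^ m : ℕ) : ℤ_[p]) • q = 0 := by
    intro q
    obtain ⟨x, rfl⟩ := Submodule.Quotient.mk_surjective _ q
    rw [← Submodule.Quotient.mk_smul, Submodule.Quotient.mk_eq_zero]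
    have : ((p ^ m : ℕ) : ℤ_[p]) • x = x * ((p ^ m : ℕ) : Λ) := by
      rw [Algebra.smul_def, map_natCast, (Nat.cast_commute (p ^ m) x).eq]
    rw [this]
    exact Submodule.smul_mem _ x (Ideal.subset_span rfl)
  obtain ⟨n, f, hf⟩ := Module.Finite.exists_fin' ℤ_[p] Λ
  let π : Λ →ₗ[ℤ_[p]] Λ ⧸ I₀ := (I₀.mkQ).restrictScalars ℤ_[p]
  have hπ : Function.Surjective π := Submodule.Quotient.mk_surjective _
  have hsurj : Function.Surjective
      (fun v : Fin n → ZMod (p ^ m) => π (f (fun i => (((v i).val : ℕ) : ℤ_[p])))) := by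
    intro q
    obtain ⟨c, hc⟩ := (hπ.comp hf) q
    refine ⟨fun i => PadicInt.toZModPow m (c i), ?_⟩
    have hker : ∀ i, ((((PadicInt.toZModPow m (c i)).val : ℕ) : ℤ_[p]) - c i) ∈
        RingHom.ker (PadicInt.toZModPow (p := p) m) := by
      intro i
      rw [RingHom.mem_ker, map_sub, map_natCast, ZMod.natCast_zmod_val, sub_self]
    have hdvd : ∀ i, ∃ e : ℤ_[p],
        (((PadicInt.toZModPow m (c i)).val : ℕ) : ℤ_[p]) - c i = ((p ^ m : ℕ) : ℤ_[p]) * e := by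
      intro i
      have := hker i
      rw [PadicInt.ker_toZModPow, Ideal.mem_span_singleton] at this
      obtain ⟨e, he⟩ := this
      exact ⟨e, by push_cast; rw [he]⟩
    choose e he using hdvd
    have hdecomp : (fun i => (((PadicInt.toZModPow m (c i)).val : ℕ) : ℤ_[p]))
        = c + ((p ^ m : ℕ) : ℤ_[p]) • e := by
      funext i
      have := he i
      simp only [Pi.add_apply, Pi.smul_apply, smul_eq_mul]
      linear_combination he i
    simp only [hdecomp, map_add, map_smul, key, add_zero, Function.comp_apply] at *
    exact hc
  exact Finite.of_surjective _ hsurj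

lemma finite_ideal_subtype (Λ : Type*) [Ring Λ] [Algebra ℤ_[p] Λ] [Module.Finite ℤ_[p] Λ]
    (m : ℕ) : Finite {I : Ideal Λ // Nat.card (Λ ⧸ I) = p ^ m} := by
  have hp : p.Prime := Fact.out
  set I₀ : Ideal Λ := Ideal.span {((p ^ m : ℕ) : Λ)} with hI₀
  haveI := finite_quot_span_pow (p := p) Λ m
  -- every ideal in the subtype contains I₀
  have hle : ∀ I : {I : Ideal Λ // Nat.card (Λ ⧸ I) = p ^ m}, I₀ ≤ I.1 := by
    rintro ⟨I, hI⟩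
    haveI : Finite (Λ ⧸ I) := by
      refine Nat.finite_of_card_ne_zero ?_
      rw [hI]; exact pow_ne_zero m hp.ne_zero
    refine Ideal.span_le.mpr (Set.singleton_subset_iff.mpr ?_)
    have h0 : (Nat.card (Λ ⧸ I)) • (Submodule.Quotient.mk (p := I) (1 : Λ)) = 0 :=
      card_nsmul_eq_zero'
    rw [hI] at h0
    have h1 : Submodule.Quotient.mk (p := I) ((p ^ m : ℕ) • (1 : Λ)) = 0 := by
      rw [← Submodule.mkQ_apply, map_nsmul, Submodule.mkQ_apply, h0]
    rw [nsmul_eq_mul, mul_one, Submodule.Quotient.mk_eq_zero] at h1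
    exact h1
  -- the set of such ideals injects into the (finite) power set of `Λ ⧸ I₀`
  have key : ∀ I J : {I : Ideal Λ // Nat.card (Λ ⧸ I) = p ^ m},
      (Submodule.Quotient.mk (p := I₀) '' (I.1 : Set Λ)
        = Submodule.Quotient.mk (p := I₀) '' (J.1 : Set Λ)) → I.1 ≤ J.1 := by
    intro I J h x hx
    have hmem : Submodule.Quotient.mk (p := I₀) x
        ∈ Submodule.Quotient.mk (p := I₀) '' (J.1 : Set Λ) := h ▸ ⟨x, hx, rfl⟩
    obtain ⟨y, hy, hxy⟩ := hmem
    have hsub : x - y ∈ I₀ := (Submodule.Quotient.eq _).mp hxy.symm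
    have hx' : x = y + (x - y) := by abel
    rw [hx']
    exact J.1.add_mem hy (hle J hsub)
  exact Finite.of_injective (fun I => Submodule.Quotient.mk (p := I₀) '' (I.1 : Set Λ))
    fun I J h => Subtype.ext (le_antisymm (key I J h) (key J I h.symm))
end Finiteness


section Count
variable {p : ℕ} [Fact p.Prime]

lemma pow_decomp {g m : ℕ} {c : Fin g → ℕ} (hp : p.Prime) (h : ∏ k, c k = p ^ m) :
    (∀ k, c k = p ^ (c k).factorization p) ∧ (∑ k, (c k).factorization p) = m := by
  have h2 : ∀ k, c k = p ^ (c k).factorization p := by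
    intro k
    obtain ⟨e, _, he⟩ := (Nat.dvd_prime_pow hp).mp (h ▸ Finset.dvd_prod_of_mem c (Finset.mem_univ k))
    rw [he, hp.factorization_pow, Finsupp.single_eq_same]
  refine ⟨h2, ?_⟩
  have h3 : (p : ℕ) ^ (∑ k, (c k).factorization p) = p ^ m := by
    rw [← Finset.prod_pow_eq_pow_sum, ← h]
    exact Finset.prod_congr rfl fun k _ => (h2 k).symm
  exact Nat.pow_right_injective hp.two_le h3

lemma leftIdealCount_pi {g : ℕ} (R : Fin g → Type*) [∀ k, Ring (R k)]
    [∀ k, Algebra ℤ_[p] (R k)] [∀ k, Module.Finite ℤ_[p] (R k)] (m : ℕ) :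
    leftIdealCount (∀ k, R k) (p ^ m) =
      ∑ μ ∈ Finset.Nat.antidiagonalTuple g m, ∏ k, leftIdealCount (R k) (p ^ μ k) := by
  have hp : p.Prime := Fact.out
  haveI : ∀ (k) (n : ℕ), Finite {J : Ideal (R k) // Nat.card (R k ⧸ J) = p ^ n} :=
    fun k n => finite_ideal_subtype (R k) n
  haveI : Finite {I : Ideal (∀ k, R k) // Nat.card ((∀ k, R k) ⧸ I) = p ^ m} :=
    finite_ideal_subtype _ m
  set T := Finset.Nat.antidiagonalTuple g m with hT
  let B := {J : ∀ k, Ideal (R k) // ∏ k, Nat.card (R k ⧸ J k) = p ^ m}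
  let eAB : {I : Ideal (∀ k, R k) // Nat.card ((∀ k, R k) ⧸ I) = p ^ m} ≃ B :=
    { toFun := fun I => ⟨fun k => compIdeal R I.1 k, by
        rw [← card_quot_piIdeal, piIdeal_compIdeal]; exact I.2⟩
      invFun := fun J => ⟨piIdeal R J.1, by rw [card_quot_piIdeal]; exact J.2⟩
      left_inv := fun I => Subtype.ext (piIdeal_compIdeal R I.1)
      right_inv := fun J => Subtype.ext (funext fun k => compIdeal_piIdeal R J.1 k) }
  haveI : Finite B := Finite.of_equiv _ eAB
  let f : B → {μ : Fin g → ℕ // μ ∈ T} := fun J =>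
    ⟨fun k => (Nat.card (R k ⧸ J.1 k)).factorization p, by
      rw [hT, Finset.Nat.mem_antidiagonalTuple]; exact (pow_decomp hp J.2).2⟩
  let C : {μ : Fin g → ℕ // μ ∈ T} → Type _ :=
    fun μ => ∀ k, {J : Ideal (R k) // Nat.card (R k ⧸ J) = p ^ (μ.1 k)}
  let eFib : ∀ μ, {b : B // f b = μ} ≃ C μ := fun μ =>
    { toFun := fun b k => ⟨b.1.1 k, by
        have h2 := (pow_decomp hp b.1.2).1 k
        have h3 : (Nat.card (R k ⧸ b.1.1 k)).factorization p = μ.1 k :=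
          congrFun (congrArg Subtype.val b.2) k
        rw [h2, h3]⟩
      invFun := fun t => ⟨⟨fun k => (t k).1, by
          have ht : ∀ k, Nat.card (R k ⧸ (t k).1) = p ^ (μ.1 k) := fun k => (t k).2
          have hμ : ∑ k, μ.1 k = m := Finset.Nat.mem_antidiagonalTuple.mp μ.2
          rw [Finset.prod_congr rfl fun k _ => ht k, Finset.prod_pow_eq_pow_sum, hμ]⟩, by
        apply Subtype.ext; funext k
        show (Nat.card (R k ⧸ (t k).1)).factorization p = μ.1 k
        rw [(t k).2, hp.factorization_pow, Finsupp.single_eq_same]⟩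
      left_inv := fun b => Subtype.ext (Subtype.ext rfl)
      right_inv := fun t => funext fun k => Subtype.ext rfl }
  have big : {I : Ideal (∀ k, R k) // Nat.card ((∀ k, R k) ⧸ I) = p ^ m}
      ≃ Σ μ : {μ : Fin g → ℕ // μ ∈ T}, C μ :=
    (eAB.trans (Equiv.sigmaFiberEquiv f).symm).trans (Equiv.sigmaCongrRight eFib)
  unfold leftIdealCount
  rw [Nat.card_congr big]
  haveI : ∀ μ, Finite (C μ) := fun μ => by
    have : ∀ k, Finite {J : Ideal (R k) // Nat.card (R k ⧸ J) = p ^ (μ.1 k)} :=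
      fun k => finite_ideal_subtype (R k) (μ.1 k)
    exact Pi.finite
  letI : ∀ μ, Fintype (C μ) := fun μ => Fintype.ofFinite _
  rw [Nat.card_eq_fintype_card, Fintype.card_sigma]
  have hterm : ∀ μ : {μ : Fin g → ℕ // μ ∈ T}, Fintype.card (C μ)
      = ∏ k, Nat.card {J : Ideal (R k) // Nat.card (R k ⧸ J) = p ^ (μ.1 k)} := by
    intro μ
    rw [← Nat.card_eq_fintype_card]
    exact Nat.card_pi
  rw [Finset.sum_congr rfl fun μ _ => hterm μ,
    Finset.sum_coe_sort T (fun μ => ∏ k, Nat.card {J : Ideal (R k) // Nat.card (R k ⧸ J) = p ^ (μ k)})]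
end Count

noncomputable def cancelAlgEquiv (R A Y C : Type*) [CommRing R] [CommRing A] [Algebra R A]
    [Ring Y] [Algebra A Y] [Algebra R Y] [IsScalarTower R A Y] [Ring C] [Algebra R C] :
    (Y ⊗[A] (A ⊗[R] C)) ≃ₐ[A] (Y ⊗[R] C) := by
  refine AlgEquiv.ofLinearEquiv
    (TensorProduct.AlgebraTensorModule.cancelBaseChange R A A Y C) ?_ ?_
  · show TensorProduct.AlgebraTensorModule.cancelBaseChange R A A Y C
      ((1 : Y) ⊗ₜ[A] ((1 : A) ⊗ₜ[R] (1 : C))) = 1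
    rw [TensorProduct.AlgebraTensorModule.cancelBaseChange_tmul, one_smul,
      Algebra.TensorProduct.one_def]
  · intro x y
    induction x using TensorProduct.induction_on with
    | zero => simp
    | add x₁ x₂ h₁ h₂ => simp [add_mul, h₁, h₂]
    | tmul a b =>
      induction y using TensorProduct.induction_on with
      | zero => simp
      | add y₁ y₂ h₁ h₂ => simp [mul_add, h₁, h₂]
      | tmul c d =>
        induction b using TensorProduct.induction_on with
        | zero => simp
        | add b₁ b₂ h₁ h₂ =>
          simp only [TensorProduct.tmul_add, add_mul, map_add, h₁, h₂]
        | tmul r u =>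
          induction d using TensorProduct.induction_on with
          | zero => simp
          | add d₁ d₂ h₁ h₂ =>
            simp only [TensorProduct.tmul_add, mul_add, map_add, h₁, h₂]
          | tmul s v =>
            simp only [Algebra.TensorProduct.tmul_mul_tmul,
              TensorProduct.AlgebraTensorModule.cancelBaseChange_tmul]
            rw [smul_mul_assoc, mul_smul_comm, smul_smul]

noncomputable def piTensorAlgEquiv (R : Type*) [CommRing R] {g : ℕ} (S : Fin g → Type*)
    [∀ k, Ring (S k)] [∀ k, Algebra R (S k)] (X : Type*) [Ring X] [Algebra R X] :
    ((∀ k, S k) ⊗[R] X) ≃ₐ[R] ∀ k, (S k ⊗[R] X) := by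
  refine AlgEquiv.ofLinearEquiv
    ((TensorProduct.comm R _ X).trans ((TensorProduct.piRight R R X S).trans
      (LinearEquiv.piCongrRight fun k => TensorProduct.comm R X (S k)))) ?_ ?_
  · show (LinearEquiv.piCongrRight fun k => TensorProduct.comm R X (S k))
      ((TensorProduct.piRight R R X S) ((TensorProduct.comm R _ X)
        ((1 : ∀ k, S k) ⊗ₜ[R] (1 : X)))) = 1
    funext k
    simp [Algebra.TensorProduct.one_def]
  · intro x y
    induction x using TensorProduct.induction_on with
    | zero => simp
    | add x₁ x₂ h₁ h₂ => simp only [add_mul, map_add, h₁, h₂]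
    | tmul f a =>
      induction y using TensorProduct.induction_on with
      | zero => simp
      | add y₁ y₂ h₁ h₂ => simp only [mul_add, map_add, h₁, h₂]
      | tmul h b =>
        simp only [Algebra.TensorProduct.tmul_mul_tmul, LinearEquiv.trans_apply,
          TensorProduct.comm_tmul, TensorProduct.piRight_apply,
          TensorProduct.piRightHom_tmul, LinearEquiv.piCongrRight_apply]
        funext k
        simp [Algebra.TensorProduct.tmul_mul_tmul]



/-- Let `p` be a prime, `Λ₁`, `Λ₂` rings whose additive
groups are free `ℤ`-modules of finite rank, and suppose
`ℤ_[p] ⊗[ℤ] Λ₂ ≅ S₁ × ⋯ × S_g` as `ℤ_[p]`-algebras, where each `S k` is free of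
finite rank over `ℤ_[p]`.  Then for every `m : ℕ`, the number of left ideals of
`ℤ_[p] ⊗[ℤ] (Λ₁ ⊗[ℤ] Λ₂)` of index `p^m` equals
`∑_{m₁+⋯+m_g = m} ∏_k a_{p^{m_k}}(S_k ⊗[ℤ_[p]] (ℤ_[p] ⊗[ℤ] Λ₁))`. -/
theorem stmt15 (p : ℕ) [Fact p.Prime]
    (Λ₁ Λ₂ : Type*) [Ring Λ₁] [Ring Λ₂]
    [Module.Free ℤ Λ₁] [Module.Finite ℤ Λ₁]
    [Module.Free ℤ Λ₂] [Module.Finite ℤ Λ₂]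
    (g : ℕ) (S : Fin g → Type*) [∀ k, Ring (S k)] [∀ k, Algebra ℤ_[p] (S k)]
    [∀ k, Module.Free ℤ_[p] (S k)] [∀ k, Module.Finite ℤ_[p] (S k)]
    (iso : (ℤ_[p] ⊗[ℤ] Λ₂) ≃ₐ[ℤ_[p]] ((k : Fin g) → S k)) :
    ∀ m : ℕ,
      @leftIdealCount (ℤ_[p] ⊗[ℤ] (Λ₁ ⊗[ℤ] Λ₂)) Algebra.TensorProduct.instRing (p ^ m) =
        ∑ μ ∈ Finset.Nat.antidiagonalTuple g m,
          ∏ k : Fin g,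
            leftIdealCount ((S k) ⊗[ℤ_[p]] (ℤ_[p] ⊗[ℤ] Λ₁)) (p ^ μ k) := by
  intro m
  letI : Ring (ℤ_[p] ⊗[ℤ] (Λ₁ ⊗[ℤ] Λ₂)) := Algebra.TensorProduct.instRing
  letI : Ring (ℤ_[p] ⊗[ℤ] (Λ₂ ⊗[ℤ] Λ₁)) := Algebra.TensorProduct.instRing
  letI : Ring ((ℤ_[p] ⊗[ℤ] Λ₂) ⊗[ℤ] Λ₁) := Algebra.TensorProduct.instRing
  letI : Algebra ℤ_[p] ((ℤ_[p] ⊗[ℤ] Λ₂) ⊗[ℤ] Λ₁) := Algebra.TensorProduct.leftAlgebra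
  have e1 : (ℤ_[p] ⊗[ℤ] (Λ₁ ⊗[ℤ] Λ₂)) ≃ₐ[ℤ] (ℤ_[p] ⊗[ℤ] (Λ₂ ⊗[ℤ] Λ₁)) :=
    Algebra.TensorProduct.congr (AlgEquiv.refl (R := ℤ) (A₁ := ℤ_[p])) (Algebra.TensorProduct.comm ℤ Λ₁ Λ₂)
  have e2 : (ℤ_[p] ⊗[ℤ] (Λ₂ ⊗[ℤ] Λ₁)) ≃ₐ[ℤ] ((ℤ_[p] ⊗[ℤ] Λ₂) ⊗[ℤ] Λ₁) :=
    (Algebra.TensorProduct.assoc ℤ ℤ ℤ ℤ_[p] Λ₂ Λ₁).symm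
  have e3 : ((ℤ_[p] ⊗[ℤ] Λ₂) ⊗[ℤ_[p]] (ℤ_[p] ⊗[ℤ] Λ₁)) ≃ₐ[ℤ_[p]] ((ℤ_[p] ⊗[ℤ] Λ₂) ⊗[ℤ] Λ₁) :=
    cancelAlgEquiv ℤ ℤ_[p] (ℤ_[p] ⊗[ℤ] Λ₂) Λ₁
  have e4 : ((ℤ_[p] ⊗[ℤ] Λ₂) ⊗[ℤ_[p]] (ℤ_[p] ⊗[ℤ] Λ₁)) ≃ₐ[ℤ_[p]]
      ((∀ k, S k) ⊗[ℤ_[p]] (ℤ_[p] ⊗[ℤ] Λ₁)) :=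
    Algebra.TensorProduct.congr iso (AlgEquiv.refl (R := ℤ_[p]) (A₁ := ℤ_[p] ⊗[ℤ] Λ₁))
  have e5 : ((∀ k, S k) ⊗[ℤ_[p]] (ℤ_[p] ⊗[ℤ] Λ₁)) ≃ₐ[ℤ_[p]]
      ∀ k, (S k ⊗[ℤ_[p]] (ℤ_[p] ⊗[ℤ] Λ₁)) := piTensorAlgEquiv ℤ_[p] S (ℤ_[p] ⊗[ℤ] Λ₁)
  have E : (ℤ_[p] ⊗[ℤ] (Λ₁ ⊗[ℤ] Λ₂)) ≃+* (∀ k, S k ⊗[ℤ_[p]] (ℤ_[p] ⊗[ℤ] Λ₁)) :=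
    ((((e1.toRingEquiv.trans e2.toRingEquiv).trans e3.toRingEquiv.symm).trans
      e4.toRingEquiv).trans e5.toRingEquiv)
  exact (leftIdealCount_congr E (p ^ m)).trans
    (leftIdealCount_pi (fun k => S k ⊗[ℤ_[p]] (ℤ_[p] ⊗[ℤ] Λ₁)) m)
end
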